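/- arXiv:1811.01800 — 3 statements merged into one kernel-verified Lean document; each statement's English description precedes it below -/
import Mathlib

section
/- For every graph G on the vertex set [n], the likelihood ratio satisfies L(G) = X_Γ(G) / E0[X_Γ], where E0[X_Γ] is the expected number of copies of Γ under ℙ0. -/
open scoped Classical BigOperators
open Filter

namespace PlantedStructures

/-- A graph on vertex set `[n]`. -/
abbrev Graph (n : ℕ) := SimpleGraph (Fin n)

/-- Number of edges of a graph on `[n]`. -/
noncomputable def edgeCount {n : ℕ} (G : Graph n) : ℕ := G.edgeSet.ncard

/-- The Erdős–Rényi probability `ℙ0(G)` of an individual graph `G` on `[n]`,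
with edge probability `p`. -/
noncomputable def P0 (n : ℕ) (p : ℝ) (G : Graph n) : ℝ :=
  p ^ edgeCount G * (1 - p) ^ (n.choose 2 - edgeCount G)

/-- Probability of an event under `ℙ0`. -/
noncomputable def Pr0 (n : ℕ) (p : ℝ) (A : Graph n → Prop) : ℝ :=
  ∑ G : Graph n, if A G then P0 n p G else 0

/-- Expectation of a functional of the graph under `ℙ0`. -/
noncomputable def E0 (n : ℕ) (p : ℝ) (f : Graph n → ℝ) : ℝ :=
  ∑ G : Graph n, P0 n p G * f G

/-- The probability `ℙ1(G)` of an individual graph `G` on `[n]` under the planted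
distribution: `G = G0 ⊔ σ(Γ)` where `G0 ~ G(n,p)` and `σ` is a uniformly random
injection of the vertices of `Γ` into `[n]`, independent of `G0`. -/
noncomputable def P1 (n : ℕ) (p : ℝ) {V : Type*} [Fintype V] (Γ : SimpleGraph V)
    (G : Graph n) : ℝ :=
  (∑ σ : V ↪ Fin n, ∑ G0 : Graph n, if G0 ⊔ Γ.map σ = G then P0 n p G0 else 0) /
    (Fintype.card (V ↪ Fin n) : ℝ)

/-- Probability of a joint event of the planted injection `σ` and the observed
graph `G = G0 ⊔ σ(Γ)`, under the planted distribution. -/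
noncomputable def PrJoint (n : ℕ) (p : ℝ) {V : Type*} [Fintype V] (Γ : SimpleGraph V)
    (A : (V ↪ Fin n) → Graph n → Prop) : ℝ :=
  (∑ σ : V ↪ Fin n, ∑ G0 : Graph n, if A σ (G0 ⊔ Γ.map σ) then P0 n p G0 else 0) /
    (Fintype.card (V ↪ Fin n) : ℝ)

/-- Probability of an event under the planted distribution `ℙ1`. -/
noncomputable def Pr1 (n : ℕ) (p : ℝ) {V : Type*} [Fintype V] (Γ : SimpleGraph V)
    (A : Graph n → Prop) : ℝ :=
  PrJoint n p Γ (fun _ G => A G)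

/-- The likelihood ratio `L(G) = ℙ1(G) / ℙ0(G)`. -/
noncomputable def LR (n : ℕ) (p : ℝ) {V : Type*} [Fintype V] (Γ : SimpleGraph V)
    (G : Graph n) : ℝ :=
  P1 n p Γ G / P0 n p G

/-- The number of copies of `Γ` in `G`, i.e. of subgraphs of `G` isomorphic to `Γ`. -/
noncomputable def numCopies {V : Type*} (Γ : SimpleGraph V) {n : ℕ} (G : Graph n) : ℕ :=
  Set.ncard {H : G.Subgraph | Nonempty (H.coe ≃g Γ)}

/-- Total variation distance between `ℙ1` and `ℙ0`. -/
noncomputable def dTV (n : ℕ) (p : ℝ) {V : Type*} [Fintype V] (Γ : SimpleGraph V) : ℝ :=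
  (∑ G : Graph n, |P1 n p Γ G - P0 n p G|) / 2

/-- The planted vertex set `𝒦 = σ([K])`. -/
noncomputable def plantedSet {n : ℕ} {V : Type*} [Fintype V] (σ : V ↪ Fin n) :
    Finset (Fin n) :=
  Finset.univ.map σ

/-- The overlap `ov(K̂) = Σ_{i ∈ [n]} ℙ1(i ∈ K̂(G) ∩ 𝒦)` of an estimator `K̂`. -/
noncomputable def overlap (n : ℕ) (p : ℝ) {V : Type*} [Fintype V] (Γ : SimpleGraph V)
    (kHat : Graph n → Finset (Fin n)) : ℝ :=
  (∑ σ : V ↪ Fin n, ∑ G0 : Graph n,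
      P0 n p G0 * ((kHat (G0 ⊔ Γ.map σ) ∩ plantedSet σ).card : ℝ)) /
    (Fintype.card (V ↪ Fin n) : ℝ)


/-- The star graph with `K` edges: vertex `0` is the center, joined to the `K` leaves. -/
def starGraph (K : ℕ) : SimpleGraph (Fin (K + 1)) :=
  SimpleGraph.fromRel (fun i _ => i = 0)

/-- `inPathEdge K u v` states that `{u, v}` is an edge of the fixed path
`(1 − 2 − ⋯ − K)` on the first `K` vertices of `[n]`. -/
def inPathEdge (K : ℕ) {n : ℕ} (u v : Fin n) : Prop :=
  u.val < K ∧ v.val < K ∧ (u.val + 1 = v.val ∨ v.val + 1 = u.val)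

/-- The number of ordered `K`-paths in `G`: ordered tuples of `K` distinct vertices
in which consecutive vertices are adjacent in `G`. -/
noncomputable def numOrderedPaths (n K : ℕ) (G : Graph n) : ℕ :=
  Set.ncard {f : Fin K ↪ Fin n |
    ∀ (i : ℕ) (h : i + 1 < K), G.Adj (f ⟨i, Nat.lt_of_succ_lt h⟩) (f ⟨i + 1, h⟩)}

/-- The number `S` of edges that the ordered `K`-path `f` has in common with the
fixed path `(1 − 2 − ⋯ − K)`. -/
noncomputable def commonEdges (n K : ℕ) (f : Fin K ↪ Fin n) : ℕ :=
  ((Finset.range K).filter (fun i =>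
    ∃ h : i + 1 < K, inPathEdge K (f ⟨i, Nat.lt_of_succ_lt h⟩) (f ⟨i + 1, h⟩))).card

/-- The number of indices `1 ≤ t ≤ m` with `Z_t = 1`, i.e. `Σ_{t=1}^m Z_t⁺`, for the
random path given by the injection `f`. -/
noncomputable def zPlusSum (n K m : ℕ) (f : Fin K ↪ Fin n) : ℕ :=
  ((Finset.range m).filter (fun i =>
    ∃ h : i + 1 < K, inPathEdge K (f ⟨i, Nat.lt_of_succ_lt h⟩) (f ⟨i + 1, h⟩))).card

/-- `z⁺` for the three states `−1, 0, 1` (encoded as `0, 1, 2 : Fin 3`). -/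
def statePlus : Fin 3 → ℕ := ![0, 0, 1]

/-- Initial distribution of the Markov chain `Z′`:
`ℙ(Z′_1 = 1) = (K/n′)(2/n′)`, `ℙ(Z′_1 ≥ 0) = K/n′`, where `n′ = n − K`. -/
noncomputable def chainInit (n K : ℕ) : Fin 3 → ℝ :=
  ![1 - K / ((n : ℝ) - K),
    K / ((n : ℝ) - K) - 2 * K / ((n : ℝ) - K) ^ 2,
    2 * K / ((n : ℝ) - K) ^ 2]

/-- Transition matrix of the Markov chain `Z′` on states `−1, 0, 1`. -/
noncomputable def chainTrans (n K : ℕ) : Fin 3 → Fin 3 → ℝ :=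
  ![![1 - K / ((n : ℝ) - K), K / ((n : ℝ) - K), 0],
    ![1 - K / ((n : ℝ) - K), ((K : ℝ) - 2) / ((n : ℝ) - K), 2 / ((n : ℝ) - K)],
    ![1 - K / ((n : ℝ) - K), ((K : ℝ) - 1) / ((n : ℝ) - K), 1 / ((n : ℝ) - K)]]

/-- `chainF n K x t s = E[x^{Σ_{u=1}^{t+1} Z′_u⁺} ⬝ 1{Z′_{t+1} = s}]`. -/
noncomputable def chainF (n K : ℕ) (x : ℝ) : ℕ → Fin 3 → ℝ
  | 0 => fun s => chainInit n K s * x ^ statePlus s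
  | (t + 1) => fun s =>
      (∑ s' : Fin 3, chainF n K x t s' * chainTrans n K s' s) * x ^ statePlus s

/-- `E[x^{Σ_{t=1}^m Z′_t⁺}]` for the Markov chain `Z′`. -/
noncomputable def chainExp (n K : ℕ) (x : ℝ) (m : ℕ) : ℝ :=
  ∑ s : Fin 3, chainF n K x (m - 1) s

/-- `ψ_D(μ) = ℙ(Poisson(μ) ≥ D)`. -/
noncomputable def psi (D : ℕ) (μ : ℝ) : ℝ :=
  1 - ∑ j ∈ Finset.range D, Real.exp (-μ) * μ ^ j / (Nat.factorial j)

/-- `p*(D,λ)`: the largest nonnegative root of `p = ψ_D(λ p)`. -/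
noncomputable def pstar (D : ℕ) (lam : ℝ) : ℝ :=
  sSup {p : ℝ | 0 ≤ p ∧ p = psi D (lam * p)}

/-- `λ_D = sup{λ > 0 : p*(D,λ) = 0}`, the threshold for emergence of the `D`-core. -/
noncomputable def lambdaD (D : ℕ) : ℝ :=
  sSup {lam : ℝ | 0 < lam ∧ pstar D lam = 0}

/-- The sequence `p_h` (for `h ≥ 1`): `p_1 = 1`, `p_{h+1} = ψ_D(λ p_h)`. -/
noncomputable def pseq (D : ℕ) (lam : ℝ) : ℕ → ℝ
  | 0 => 1
  | 1 => 1
  | (h + 2) => psi D (lam * pseq D lam (h + 1))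

/-- `h̄(n) = inf{h ≥ 1 : p_h < 1/n}`. -/
noncomputable def hbar (D : ℕ) (lam : ℝ) (n : ℕ) : ℕ :=
  sInf {h : ℕ | 1 ≤ h ∧ pseq D lam h < 1 / n}

/-- `h̲(n) = sup{h ≥ 1 : p_h > ln(n)/n}`. -/
noncomputable def hlow (D : ℕ) (lam : ℝ) (n : ℕ) : ℕ :=
  sSup {h : ℕ | 1 ≤ h ∧ Real.log n / n < pseq D lam h}

/-- The vertex type of the complete `D`-ary tree of height `h`:
`D^ℓ` vertices at each depth `0 ≤ ℓ ≤ h`. -/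
abbrev DaryVertex (D h : ℕ) : Type := Σ ℓ : Fin (h + 1), Fin (D ^ (ℓ : ℕ))

/-- The complete `D`-ary tree of height `h`: every vertex at depth `ℓ < h` has exactly
`D` children; the vertex `m` at depth `ℓ + 1` has parent `m / D` at depth `ℓ`. -/
def daryTree (D h : ℕ) : SimpleGraph (DaryVertex D h) :=
  SimpleGraph.fromRel (fun u v =>
    (u.1 : ℕ) + 1 = (v.1 : ℕ) ∧ (v.2 : ℕ) / D = (u.2 : ℕ))

/-- Neighbourhood of a vertex, as a `Finset`. -/
noncomputable def nbhd {n : ℕ} (G : Graph n) (v : Fin n) : Finset (Fin n) :=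
  Finset.univ.filter (fun w => G.Adj v w)

/-- `v` is a vertex of maximal degree in `G`. -/
def isMaxDegVertex {n : ℕ} (G : Graph n) (v : Fin n) : Prop :=
  ∀ w : Fin n, (nbhd G w).card ≤ (nbhd G v).card

/-- Degree of `v` inside the vertex set `S` (for the peeling operation). -/
noncomputable def degIn {n : ℕ} (G : Graph n) (S : Finset (Fin n)) (v : Fin n) : ℕ :=
  (S.filter (fun w => G.Adj v w)).card

/-- One peeling operation: remove from `S` all vertices of degree one
(in the subgraph of `G` induced on `S`). -/
noncomputable def peel {n : ℕ} (G : Graph n) (S : Finset (Fin n)) : Finset (Fin n) :=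
  S.filter (fun v => degIn G S v ≠ 1)

/-- The vertex set of a connected component, as a `Finset`. -/
noncomputable def componentFinset {n : ℕ} (G : Graph n) (c : G.ConnectedComponent) :
    Finset (Fin n) :=
  Finset.univ.filter (fun w => G.connectedComponentMk w = c)

/-- The set `S` contains a longest path of `G`. -/
def containsLongestPath {n : ℕ} (G : Graph n) (S : Finset (Fin n)) : Prop :=
  ∃ (u v : Fin n) (p : G.Walk u v), p.IsPath ∧
    (∀ (u' v' : Fin n) (q : G.Walk u' v'), q.IsPath → q.length ≤ p.length) ∧
    (∀ w ∈ p.support, w ∈ S)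


/-- The proportion `I_Γ` of ordered pairs of copies of `Γ` in `G` whose vertex sets
intersect (set to `0` when `G` contains no copy of `Γ`). -/
noncomputable def IGamma {V : Type*} (Γ : SimpleGraph V) {n : ℕ} (G : Graph n) : ℝ :=
  if numCopies Γ G = 0 then 0
  else
    (Set.ncard {H : G.Subgraph × G.Subgraph |
        Nonempty (H.1.coe ≃g Γ) ∧ Nonempty (H.2.coe ≃g Γ) ∧ (H.1.verts ∩ H.2.verts).Nonempty} : ℝ)
      / (numCopies Γ G : ℝ) ^ 2

/-- The overlap of the randomized star estimator which outputs the max-degree vertex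
`vstar G` together with `K` of its neighbours chosen uniformly at random:
`Σ_i ℙ1(i ∈ K̂(G) ∩ 𝒦)`, averaging over the planted injection `σ`, the graph `G0` and
the uniformly random `K`-subset of neighbours. -/
noncomputable def starEstOverlap (n K : ℕ) (p : ℝ) (vstar : Graph n → Fin n) : ℝ :=
  (∑ σ : Fin (K + 1) ↪ Fin n, ∑ G0 : Graph n, P0 n p G0 *
      ((if vstar (G0 ⊔ (starGraph K).map σ) ∈ plantedSet σ then (1 : ℝ) else 0) +
        (∑ S ∈ (nbhd (G0 ⊔ (starGraph K).map σ)
              (vstar (G0 ⊔ (starGraph K).map σ))).powersetCard K,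
            ((S ∩ plantedSet σ).card : ℝ)) /
          (((nbhd (G0 ⊔ (starGraph K).map σ)
              (vstar (G0 ⊔ (starGraph K).map σ))).powersetCard K).card : ℝ))) /
    (Fintype.card (Fin (K + 1) ↪ Fin n) : ℝ)


section Aux

open Finset

variable {n K : ℕ}

/-- The set of potential edges on `[n]`. -/
noncomputable def potEdges (n : ℕ) : Finset (Sym2 (Fin n)) :=
  Finset.univ.filter fun e => ¬ e.IsDiag

lemma card_potEdges (n : ℕ) : (potEdges n).card = n.choose 2 := by
  have h := Sym2.card_subtype_not_diag (α := Fin n)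
  rw [Fintype.card_subtype] at h
  simpa [potEdges] using h

lemma edgeFinset_subset_potEdges (G : Graph n) [Fintype G.edgeSet] :
    G.edgeFinset ⊆ potEdges n := fun e he =>
  Finset.mem_filter.2 ⟨Finset.mem_univ _,
    G.not_isDiag_of_mem_edgeSet (SimpleGraph.mem_edgeFinset.1 he)⟩

lemma edgeCount_eq (G : Graph n) [Fintype G.edgeSet] : edgeCount G = G.edgeFinset.card := by
  rw [edgeCount, ← SimpleGraph.coe_edgeFinset, Set.ncard_coe_finset]

lemma fromEdgeSet_coe_edgeSet {S : Finset (Sym2 (Fin n))} (hS : S ⊆ potEdges n) :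
    (SimpleGraph.fromEdgeSet (S : Set (Sym2 (Fin n)))).edgeSet = (S : Set (Sym2 (Fin n))) := by
  rw [SimpleGraph.edgeSet_fromEdgeSet]
  ext e
  simp only [Set.mem_diff, Finset.mem_coe, Set.mem_setOf_eq, and_iff_left_iff_imp]
  intro he
  exact (Finset.mem_filter.1 (hS he)).2

lemma fromEdgeSet_coe_edgeFinset {S : Finset (Sym2 (Fin n))} (hS : S ⊆ potEdges n)
    [Fintype (SimpleGraph.fromEdgeSet (S : Set (Sym2 (Fin n)))).edgeSet] :
    (SimpleGraph.fromEdgeSet (S : Set (Sym2 (Fin n)))).edgeFinset = S := by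
  apply Finset.coe_injective
  rw [SimpleGraph.coe_edgeFinset, fromEdgeSet_coe_edgeSet hS]

lemma edgeCount_fromEdgeSet {S : Finset (Sym2 (Fin n))} (hS : S ⊆ potEdges n) :
    edgeCount (SimpleGraph.fromEdgeSet (S : Set (Sym2 (Fin n)))) = S.card := by
  rw [edgeCount, fromEdgeSet_coe_edgeSet hS, Set.ncard_coe_finset]

lemma sum_graph_reindex (F : Graph n → ℝ) :
    ∑ G0 : Graph n, F G0
      = ∑ S ∈ (potEdges n).powerset, F (SimpleGraph.fromEdgeSet (S : Set (Sym2 (Fin n)))) := by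
  refine Finset.sum_nbij' (fun G0 => G0.edgeFinset)
    (fun S => SimpleGraph.fromEdgeSet (S : Set (Sym2 (Fin n)))) ?_ ?_ ?_ ?_ ?_
  · intro G0 _
    exact Finset.mem_powerset.2 (edgeFinset_subset_potEdges G0)
  · intro S _
    exact Finset.mem_univ _
  · intro G0 _
    simp only [SimpleGraph.coe_edgeFinset, SimpleGraph.fromEdgeSet_edgeSet]
  · intro S hS
    apply Finset.coe_injective
    rw [SimpleGraph.coe_edgeFinset, fromEdgeSet_coe_edgeSet (Finset.mem_powerset.1 hS)]
  · intro G0 _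
    simp only [SimpleGraph.coe_edgeFinset, SimpleGraph.fromEdgeSet_edgeSet]

lemma binom_sum {β : Type*} (A : Finset β) (x y : ℝ) :
    ∑ T ∈ A.powerset, x ^ T.card * y ^ (A.card - T.card) = (x + y) ^ A.card :=
  calc ∑ T ∈ A.powerset, x ^ T.card * y ^ (A.card - T.card)
      = ∑ T ∈ A.powerset, (∏ _i ∈ T, x) * ∏ _i ∈ A \ T, y :=
        Finset.sum_congr rfl fun T hT => by
          rw [Finset.prod_const, Finset.prod_const,
            Finset.card_sdiff_of_subset (Finset.mem_powerset.1 hT)]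
    _ = ∏ _i ∈ A, (x + y) := (Finset.prod_add _ _ _).symm
    _ = (x + y) ^ A.card := by rw [Finset.prod_const]

lemma P0_fromEdgeSet (p : ℝ) {S : Finset (Sym2 (Fin n))} (hS : S ⊆ potEdges n) :
    P0 n p (SimpleGraph.fromEdgeSet (S : Set (Sym2 (Fin n))))
      = p ^ S.card * (1 - p) ^ ((potEdges n).card - S.card) := by
  rw [P0, edgeCount_fromEdgeSet hS, card_potEdges]

lemma sum_P0_eq_one (p : ℝ) : ∑ G0 : Graph n, P0 n p G0 = 1 := by
  rw [sum_graph_reindex (fun G0 => P0 n p G0)]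
  rw [Finset.sum_congr rfl fun S hS => P0_fromEdgeSet p (Finset.mem_powerset.1 hS)]
  rw [binom_sum]
  norm_num

lemma sup_eq_iff_union {S : Finset (Sym2 (Fin n))} (hS : S ⊆ potEdges n) (H G : Graph n)
    [Fintype H.edgeSet] [Fintype G.edgeSet] :
    (SimpleGraph.fromEdgeSet (S : Set (Sym2 (Fin n))) ⊔ H = G)
      ↔ S ∪ H.edgeFinset = G.edgeFinset := by
  rw [← SimpleGraph.edgeSet_inj, SimpleGraph.edgeSet_sup, fromEdgeSet_coe_edgeSet hS,
    ← Finset.coe_inj, Finset.coe_union, SimpleGraph.coe_edgeFinset, SimpleGraph.coe_edgeFinset]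

lemma sum_if_sup_eq (p : ℝ) (hp0 : 0 < p) (H G : Graph n) :
    ∑ G0 : Graph n, (if G0 ⊔ H = G then P0 n p G0 else 0)
      = if H ≤ G then P0 n p G / p ^ edgeCount H else 0 := by
  by_cases hH : H ≤ G
  swap
  · rw [if_neg hH]
    apply Finset.sum_eq_zero
    intro G0 _
    rw [if_neg]
    intro h
    exact hH (h ▸ le_sup_right)
  rw [if_pos hH]
  rw [sum_graph_reindex (fun G0 => if G0 ⊔ H = G then P0 n p G0 else 0)]
  have hEH : H.edgeFinset ⊆ G.edgeFinset := SimpleGraph.edgeFinset_mono hH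
  have hEG : G.edgeFinset ⊆ potEdges n := edgeFinset_subset_potEdges G
  have hstep : ∀ S ∈ (potEdges n).powerset,
      (if SimpleGraph.fromEdgeSet (S : Set (Sym2 (Fin n))) ⊔ H = G
        then P0 n p (SimpleGraph.fromEdgeSet (S : Set (Sym2 (Fin n)))) else 0)
      = (if S ∪ H.edgeFinset = G.edgeFinset
        then p ^ S.card * (1 - p) ^ ((potEdges n).card - S.card) else 0) := by
    intro S hS
    have hS' := Finset.mem_powerset.1 hS
    rw [P0_fromEdgeSet p hS']
    by_cases hc : S ∪ H.edgeFinset = G.edgeFinset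
    · rw [if_pos ((sup_eq_iff_union hS' H G).2 hc), if_pos hc]
    · rw [if_neg (fun h => hc ((sup_eq_iff_union hS' H G).1 h)), if_neg hc]
  rw [Finset.sum_congr rfl hstep, ← Finset.sum_filter]
  -- reindex by the powerset of the edges of H
  set M := (potEdges n).card with hM
  set eG := G.edgeFinset.card with heG
  set eH := H.edgeFinset.card with heH
  have heHG : eH ≤ eG := Finset.card_le_card hEH
  have heGM : eG ≤ M := Finset.card_le_card hEG
  have hre : ∑ S ∈ (potEdges n).powerset.filter (fun S => S ∪ H.edgeFinset = G.edgeFinset),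
        p ^ S.card * (1 - p) ^ (M - S.card)
      = ∑ T ∈ H.edgeFinset.powerset,
        (p ^ (eG - eH) * (1 - p) ^ (M - eG)) * (p ^ T.card * (1 - p) ^ (eH - T.card)) := by
    refine Finset.sum_nbij' (fun S => S ∩ H.edgeFinset)
      (fun T => (G.edgeFinset \ H.edgeFinset) ∪ T) ?_ ?_ ?_ ?_ ?_
    · intro S _
      exact Finset.mem_powerset.2 Finset.inter_subset_right
    · intro T hT
      have hT' := Finset.mem_powerset.1 hT
      rw [Finset.mem_filter]
      refine ⟨Finset.mem_powerset.2 (Finset.union_subset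
        ((Finset.sdiff_subset).trans hEG) (hT'.trans (hEH.trans hEG))), ?_⟩
      rw [Finset.union_assoc, Finset.union_eq_right.2 hT', Finset.sdiff_union_of_subset hEH]
    · intro S hS
      obtain ⟨-, hc⟩ := Finset.mem_filter.1 hS
      rw [← hc, Finset.union_sdiff_right]
      exact Finset.sdiff_union_inter S _
    · intro T hT
      have hT' := Finset.mem_powerset.1 hT
      rw [Finset.union_inter_distrib_right, Finset.sdiff_inter_self,
        Finset.empty_union, Finset.inter_eq_left.2 hT']
    · intro S hS
      obtain ⟨hSpot, hc⟩ := Finset.mem_filter.1 hS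
      have hdisj : Disjoint (G.edgeFinset \ H.edgeFinset) (S ∩ H.edgeFinset) :=
        Finset.disjoint_of_subset_right Finset.inter_subset_right Finset.sdiff_disjoint
      have hSeq : (G.edgeFinset \ H.edgeFinset) ∪ (S ∩ H.edgeFinset) = S := by
        rw [← hc, Finset.union_sdiff_right, Finset.sdiff_union_inter]
      have hcard : S.card = (eG - eH) + (S ∩ H.edgeFinset).card := by
        conv_lhs => rw [← hSeq]
        rw [Finset.card_union_of_disjoint hdisj, Finset.card_sdiff_of_subset hEH]
      have htle : (S ∩ H.edgeFinset).card ≤ eH :=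
        Finset.card_le_card Finset.inter_subset_right
      rw [hcard]
      rw [pow_add]
      have hexp : M - ((eG - eH) + (S ∩ H.edgeFinset).card)
          = (M - eG) + (eH - (S ∩ H.edgeFinset).card) := by omega
      rw [hexp, pow_add]
      ring
  rw [hre, ← Finset.mul_sum, binom_sum]
  have hP0G : P0 n p G = p ^ eG * (1 - p) ^ (M - eG) := by
    rw [P0, edgeCount_eq G, heG, hM, card_potEdges]
  rw [hP0G, edgeCount_eq H, ← heH]
  rw [pow_sub₀ p (ne_of_gt hp0) heHG]
  norm_num
  ring

lemma sum_if_le (p : ℝ) (hp0 : 0 < p) (H : Graph n) :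
    ∑ G' : Graph n, (if H ≤ G' then P0 n p G' else 0) = p ^ edgeCount H := by
  have hpe : (p : ℝ) ^ edgeCount H ≠ 0 := pow_ne_zero _ (ne_of_gt hp0)
  have h1 : ∀ G' : Graph n, (if H ≤ G' then P0 n p G' else 0)
      = p ^ edgeCount H * ∑ G0 : Graph n, (if G0 ⊔ H = G' then P0 n p G0 else 0) := by
    intro G'
    rw [sum_if_sup_eq p hp0 H G']
    by_cases h : H ≤ G'
    · rw [if_pos h, if_pos h]
      field_simp
    · rw [if_neg h, if_neg h, mul_zero]
  rw [Finset.sum_congr rfl fun G' _ => h1 G', ← Finset.mul_sum, Finset.sum_comm]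
  have h2 : ∀ G0 : Graph n, ∑ G' : Graph n, (if G0 ⊔ H = G' then P0 n p G0 else 0)
      = P0 n p G0 := by
    intro G0
    rw [Finset.sum_ite_eq Finset.univ (G0 ⊔ H) (fun _ => P0 n p G0)]
    simp
  rw [Finset.sum_congr rfl fun G0 _ => h2 G0, sum_P0_eq_one p, mul_one]

lemma edgeCount_map (Γ : SimpleGraph (Fin K)) (σ : Fin K ↪ Fin n) :
    edgeCount (Γ.map σ) = edgeCount Γ := by
  have h : (Γ.map σ).edgeSet = Sym2.map σ '' Γ.edgeSet := by
    ext e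
    induction e with
    | _ a b =>
      simp only [SimpleGraph.mem_edgeSet, SimpleGraph.map_adj, Set.mem_image]
      constructor
      · rintro ⟨u, v, h, rfl, rfl⟩
        exact ⟨s(u, v), h, Sym2.map_pair_eq σ u v⟩
      · rintro ⟨e, he, hmap⟩
        induction e with
        | _ u v =>
          rw [Sym2.map_pair_eq] at hmap
          rcases Sym2.eq_iff.1 hmap with ⟨rfl, rfl⟩ | ⟨rfl, rfl⟩
          · exact ⟨u, v, (SimpleGraph.mem_edgeSet Γ).1 he, rfl, rfl⟩
          · exact ⟨v, u, ((SimpleGraph.mem_edgeSet Γ).1 he).symm, rfl, rfl⟩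
  rw [edgeCount, edgeCount, h,
    Set.ncard_image_of_injective _ (Sym2.map.injective σ.injective)]

instance subgraphFinite {m : ℕ} (G : Graph m) : Finite G.Subgraph := by
  apply Finite.of_injective (fun H : G.Subgraph => (H.verts, H.Adj))
  intro H1 H2 h
  simp only [Prod.mk.injEq] at h
  exact SimpleGraph.Subgraph.ext h.1 h.2

noncomputable instance subgraphFintype {m : ℕ} (G : Graph m) : Fintype G.Subgraph :=
  Fintype.ofFinite _

noncomputable instance isoFintype {α β : Type*} [Fintype α] [Fintype β]
    [DecidableEq α] [DecidableEq β] (A : SimpleGraph α) (B : SimpleGraph β) :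
    Fintype (A ≃g B) :=
  Fintype.ofInjective (fun e => e.toEquiv) RelIso.toEquiv_injective

/-- The subgraph of `G'` given by the planted copy of `Γ` along `σ`. -/
def Phi (Γ : SimpleGraph (Fin K)) (G' : Graph n) (σ : Fin K ↪ Fin n) : G'.Subgraph where
  verts := Set.range σ
  Adj a b := G'.Adj a b ∧ (Γ.map σ).Adj a b
  adj_sub h := h.1
  edge_vert h := by obtain ⟨-, u, v, -, rfl, -⟩ := h.2; exact ⟨u, rfl⟩
  symm := ⟨fun a b h => ⟨h.1.symm, h.2.symm⟩⟩

/-- The canonical isomorphism from `Γ` to the planted copy. -/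
noncomputable def isoPhi (Γ : SimpleGraph (Fin K)) (G' : Graph n) (σ : Fin K ↪ Fin n)
    (hle : Γ.map σ ≤ G') : Γ ≃g (Phi Γ G' σ).coe where
  toEquiv := Equiv.ofInjective σ σ.injective
  map_rel_iff' := by
    intro u v
    simp only [Equiv.ofInjective_apply, SimpleGraph.Subgraph.coe_adj]
    change (Phi Γ G' σ).Adj (σ u) (σ v) ↔ Γ.Adj u v
    constructor
    · intro h
      exact SimpleGraph.map_adj_apply.1 h.2
    · intro h
      exact ⟨hle (SimpleGraph.map_adj_apply.2 h), SimpleGraph.map_adj_apply.2 h⟩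

/-- Transport of subgraph coercions along equality of subgraphs. -/
def sgCast {m : ℕ} {G' : Graph m} {H1 H2 : G'.Subgraph} (h : H1 = H2) :
    H1.coe ≃g H2.coe where
  toEquiv := Equiv.setCongr (congrArg SimpleGraph.Subgraph.verts h)
  map_rel_iff' := by subst h; exact fun {_ _} => Iff.rfl

lemma sgCast_val {m : ℕ} {G' : Graph m} {H1 H2 : G'.Subgraph} (h : H1 = H2)
    (x : H1.verts) : ((sgCast h x : H2.verts) : Fin m) = (x : Fin m) := rfl

def embOfIso {G' : Graph n} {H : G'.Subgraph} (Γ : SimpleGraph (Fin K))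
    (χ : Γ ≃g H.coe) : Fin K ↪ Fin n :=
  ⟨fun u => (χ u : Fin n), fun u v h => χ.toEquiv.injective (Subtype.ext h)⟩

lemma embOfIso_le {G' : Graph n} {H : G'.Subgraph} (Γ : SimpleGraph (Fin K))
    (χ : Γ ≃g H.coe) : Γ.map (embOfIso Γ χ) ≤ G' := by
  intro a b hab
  obtain ⟨-, u, v, h, rfl, rfl⟩ := hab
  exact H.adj_sub (χ.map_rel_iff.2 h)

lemma Phi_embOfIso {G' : Graph n} {H : G'.Subgraph} (Γ : SimpleGraph (Fin K))
    (χ : Γ ≃g H.coe) : Phi Γ G' (embOfIso Γ χ) = H := by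
  have hverts : (Phi Γ G' (embOfIso Γ χ)).verts = H.verts := by
    ext x
    constructor
    · rintro ⟨u, rfl⟩
      exact (χ u).2
    · intro hx
      exact ⟨χ.symm ⟨x, hx⟩, congrArg Subtype.val (χ.apply_symm_apply _)⟩
  have hadj : ∀ a b, (Phi Γ G' (embOfIso Γ χ)).Adj a b ↔ H.Adj a b := by
    intro a b
    constructor
    · rintro ⟨-, -, u, v, h, rfl, rfl⟩
      exact χ.map_rel_iff.2 h
    · intro h
      refine ⟨H.adj_sub h, (H.adj_sub h).ne, χ.symm ⟨a, H.edge_vert h⟩, χ.symm ⟨b, H.edge_vert (H.symm.symm _ _ h)⟩,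
        ?_, congrArg Subtype.val (χ.apply_symm_apply _), congrArg Subtype.val (χ.apply_symm_apply _)⟩
      apply χ.map_rel_iff.1
      show H.Adj _ _
      simpa using h
  exact SimpleGraph.Subgraph.ext hverts (by funext a b; exact propext (hadj a b))

lemma sgCast_isoPhi {G' : Graph n} {H : G'.Subgraph} {σ : Fin K ↪ Fin n}
    {Γ : SimpleGraph (Fin K)} (hle : Γ.map σ ≤ G') (hΦ : Phi Γ G' σ = H) (u : Fin K) :
    sgCast hΦ ((isoPhi Γ G' σ hle) u) = ⟨σ u, hΦ ▸ ⟨u, rfl⟩⟩ :=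
  Subtype.ext (sgCast_val hΦ _)

lemma card_sigma_eq (Γ : SimpleGraph (Fin K)) (G' : Graph n) :
    (Finset.univ.filter fun σ : Fin K ↪ Fin n => Γ.map σ ≤ G').card
      = numCopies Γ G' * Fintype.card (Γ ≃g Γ) := by
  classical
  have hmem : ∀ σ ∈ (Finset.univ.filter fun σ : Fin K ↪ Fin n => Γ.map σ ≤ G'),
      Phi Γ G' σ ∈ (Finset.univ.filter fun H : G'.Subgraph => Nonempty (H.coe ≃g Γ)) := by
    intro σ hσ
    rw [Finset.mem_filter] at hσ ⊢
    exact ⟨Finset.mem_univ _, ⟨(isoPhi Γ G' σ hσ.2).symm⟩⟩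
  rw [Finset.card_eq_sum_card_fiberwise hmem]
  have hfiber : ∀ H ∈ (Finset.univ.filter fun H : G'.Subgraph => Nonempty (H.coe ≃g Γ)),
      ((Finset.univ.filter fun σ : Fin K ↪ Fin n => Γ.map σ ≤ G').filter
        fun σ => Phi Γ G' σ = H).card = Fintype.card (Γ ≃g Γ) := by
    intro H hH
    obtain ⟨ψ⟩ := (Finset.mem_filter.1 hH).2
    rw [← Finset.card_univ]
    refine Finset.card_bij'
      (fun σ hσ => ((isoPhi Γ G' σ (Finset.mem_filter.1 (Finset.mem_filter.1 hσ).1).2).trans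
        (sgCast (Finset.mem_filter.1 hσ).2)).trans ψ)
      (fun a _ => embOfIso Γ (a.trans ψ.symm)) ?_ ?_ ?_ ?_
    · intro σ hσ
      exact Finset.mem_univ _
    · intro a _
      rw [Finset.mem_filter, Finset.mem_filter]
      exact ⟨⟨Finset.mem_univ _, embOfIso_le Γ _⟩, Phi_embOfIso Γ _⟩
    · intro σ hσ
      apply DFunLike.ext
      intro u
      simp only [embOfIso, Function.Embedding.coeFn_mk, RelIso.trans_apply,
        RelIso.symm_apply_apply]
      rw [sgCast_isoPhi]
    · intro a _
      apply DFunLike.ext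
      intro u
      simp only [RelIso.trans_apply]
      rw [sgCast_isoPhi]
      conv_rhs => rw [← ψ.apply_symm_apply (a u)]
      exact congrArg ψ (Subtype.ext rfl)
  rw [Finset.sum_congr rfl hfiber, Finset.sum_const, smul_eq_mul]
  congr 1
  rw [numCopies, Set.ncard_eq_toFinset_card', Set.toFinset_setOf]

end Aux

/-- For every graph `G` on `[n]`, the likelihood ratio satisfies
`L(G) = X_Γ(G) / E0[X_Γ]`. -/
theorem statement_0 (n K : ℕ) (lam : ℝ) (hlam : 0 < lam) (hn : lam < n) (hK : K ≤ n)
    (Γ : SimpleGraph (Fin K)) (G : Graph n) :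
    LR n (lam / n) Γ G
      = (numCopies Γ G : ℝ) / E0 n (lam / n) (fun G' => (numCopies Γ G' : ℝ)) := by
  classical
  have hn0 : (0:ℝ) < (n:ℝ) := lt_trans hlam hn
  set p := lam / (n:ℝ) with hpdef
  have hp0 : 0 < p := div_pos hlam hn0
  have hp1 : p < 1 := (div_lt_one hn0).2 hn
  have hq0 : (0:ℝ) < 1 - p := by linarith
  have hP0pos : ∀ G'' : Graph n, 0 < P0 n p G'' := fun G'' =>
    mul_pos (pow_pos hp0 _) (pow_pos hq0 _)
  have hpe : (0:ℝ) < p ^ edgeCount Γ := pow_pos hp0 _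
  have hNpos : 0 < Fintype.card (Fin K ↪ Fin n) :=
    Fintype.card_pos_iff.2 ⟨Fin.castLEEmb hK⟩
  have hApos : 0 < Fintype.card (Γ ≃g Γ) := Fintype.card_pos_iff.2 ⟨RelIso.refl _⟩
  set N := (Fintype.card (Fin K ↪ Fin n) : ℝ) with hNdef
  set A := (Fintype.card (Γ ≃g Γ) : ℝ) with hAdef
  have hN : (0:ℝ) < N := by rw [hNdef]; exact_mod_cast hNpos
  have hA : (0:ℝ) < A := by rw [hAdef]; exact_mod_cast hApos
  have hcount : ∀ G'' : Graph n,
      ((Finset.univ.filter fun σ : Fin K ↪ Fin n => Γ.map σ ≤ G'').card : ℝ)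
        = (numCopies Γ G'' : ℝ) * A := by
    intro G''
    rw [hAdef]
    exact_mod_cast congrArg (Nat.cast (R := ℝ)) (card_sigma_eq Γ G'')
  have hP1 : P1 n p Γ G
      = ((Finset.univ.filter fun σ : Fin K ↪ Fin n => Γ.map σ ≤ G).card : ℝ)
        * (P0 n p G / p ^ edgeCount Γ) / N := by
    rw [P1]
    congr 1
    have h1 : ∀ σ : Fin K ↪ Fin n,
        (∑ G0 : Graph n, if G0 ⊔ Γ.map σ = G then P0 n p G0 else 0)
          = if Γ.map σ ≤ G then P0 n p G / p ^ edgeCount Γ else 0 := by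
      intro σ
      rw [sum_if_sup_eq p hp0 (Γ.map σ) G, edgeCount_map Γ σ]
    rw [Finset.sum_congr rfl fun σ _ => h1 σ, ← Finset.sum_filter, Finset.sum_const,
      nsmul_eq_mul]
  have hE0 : E0 n p (fun G' => (numCopies Γ G' : ℝ)) = N * p ^ edgeCount Γ / A := by
    rw [E0]
    have h1 : ∀ G' : Graph n, P0 n p G' * (numCopies Γ G' : ℝ)
        = (∑ σ : Fin K ↪ Fin n, if Γ.map σ ≤ G' then P0 n p G' else 0) / A := by
      intro G'
      have h2 : (∑ σ : Fin K ↪ Fin n, if Γ.map σ ≤ G' then P0 n p G' else 0)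
          = ((Finset.univ.filter fun σ : Fin K ↪ Fin n => Γ.map σ ≤ G').card : ℝ)
            * P0 n p G' := by
        rw [← Finset.sum_filter, Finset.sum_const, nsmul_eq_mul]
      rw [h2, hcount G']
      field_simp
    rw [Finset.sum_congr rfl fun G' _ => h1 G', ← Finset.sum_div, Finset.sum_comm]
    have h3 : ∀ σ : Fin K ↪ Fin n,
        (∑ G' : Graph n, if Γ.map σ ≤ G' then P0 n p G' else 0) = p ^ edgeCount Γ := by
      intro σ
      rw [sum_if_le p hp0 (Γ.map σ), edgeCount_map Γ σ]
    rw [Finset.sum_congr rfl fun σ _ => h3 σ, Finset.sum_const, Finset.card_univ,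
      nsmul_eq_mul]
  rw [LR, hP1, hE0]
  have hnum : (numCopies Γ G : ℝ)
      = ((Finset.univ.filter fun σ : Fin K ↪ Fin n => Γ.map σ ≤ G).card : ℝ) / A := by
    rw [hcount G]
    field_simp
  rw [hnum]
  have hP0G := hP0pos G
  generalize ((Finset.univ.filter fun σ : Fin K ↪ Fin n => Γ.map σ ≤ G).card : ℝ) = X
  field_simp

end PlantedStructures
end

section
/- Assume K = K(n) = o(√n), E0[X_Γ] = ω(1), and E0[L²] = 1 + o(1) as n → ∞. Then every estimator K̂ of the planted set 𝒦 satisfies ov(K̂) = o(K); that is, reconstruction fails. -/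
open scoped Classical BigOperators
open Filter

namespace PlantedStructures

-- basic edgeCount lemmas
lemma edgeCount_eq_card {n : ℕ} (G : Graph n) : edgeCount G = G.edgeFinset.card := by
  rw [edgeCount, SimpleGraph.edgeFinset, Set.ncard_eq_toFinset_card']

lemma edgeCount_mono {n : ℕ} {A B : Graph n} (h : A ≤ B) : edgeCount A ≤ edgeCount B :=
  Set.ncard_le_ncard (SimpleGraph.edgeSet_mono h) (Set.toFinite _)

lemma edgeCount_sup_disjoint {n : ℕ} {A B : Graph n} (h : Disjoint A B) :
    edgeCount (A ⊔ B) = edgeCount A + edgeCount B := by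
  rw [edgeCount, SimpleGraph.edgeSet_sup,
    Set.ncard_union_eq (SimpleGraph.disjoint_edgeSet.2 h) (Set.toFinite _) (Set.toFinite _)]
  rfl

lemma edgeCount_bot {n : ℕ} : edgeCount (⊥ : Graph n) = 0 := by
  rw [edgeCount, SimpleGraph.edgeSet_bot, Set.ncard_empty]

lemma edgeCount_top {n : ℕ} : edgeCount (⊤ : Graph n) = n.choose 2 := by
  have h := SimpleGraph.card_edgeFinset_top_eq_card_choose_two (V := Fin n)
  rw [Fintype.card_fin] at h
  rw [edgeCount_eq_card]
  convert h using 2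
  apply Finset.coe_injective
  simp [SimpleGraph.coe_edgeFinset]

lemma edgeCount_le {n : ℕ} (G : Graph n) : edgeCount G ≤ n.choose 2 := by
  rw [← edgeCount_top]; exact edgeCount_mono le_top

lemma edgeCount_sup_le {n : ℕ} (A B : Graph n) :
    edgeCount (A ⊔ B) ≤ edgeCount A + edgeCount B := by
  rw [edgeCount, SimpleGraph.edgeSet_sup]
  exact Set.ncard_union_le _ _

-- powerset sum
lemma sum_le_pow {n : ℕ} (p q : ℝ) (D : Graph n) :
    ∑ W : Graph n, (if W ≤ D then p ^ edgeCount W * q ^ (edgeCount D - edgeCount W) else 0)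
      = (p + q) ^ edgeCount D := by
  classical
  rw [← Finset.sum_filter]
  have h := Finset.prod_add (fun _ : Sym2 (Fin n) => p) (fun _ => q) D.edgeFinset
  simp only [Finset.prod_const] at h
  rw [edgeCount_eq_card D, h]
  refine (Finset.sum_bij' (fun (W : Graph n) _ => W.edgeFinset)
    (fun (t : Finset (Sym2 (Fin n))) _ => SimpleGraph.fromEdgeSet ↑t) ?_ ?_ ?_ ?_ ?_)
  · intro W hW
    simp only [Finset.mem_filter, Finset.mem_univ, true_and] at hW
    exact Finset.mem_powerset.2 (SimpleGraph.edgeFinset_mono hW)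
  · intro t ht
    simp only [Finset.mem_powerset] at ht
    simp only [Finset.mem_filter, Finset.mem_univ, true_and]
    calc SimpleGraph.fromEdgeSet ↑t ≤ SimpleGraph.fromEdgeSet ↑D.edgeFinset := by
          apply SimpleGraph.fromEdgeSet_mono
          exact_mod_cast ht
      _ = D := by rw [SimpleGraph.coe_edgeFinset, SimpleGraph.fromEdgeSet_edgeSet]
  · intro W hW
    simp only [SimpleGraph.coe_edgeFinset, SimpleGraph.fromEdgeSet_edgeSet]
  · intro t ht
    simp only [Finset.mem_powerset] at ht
    have hd : (↑t : Set (Sym2 (Fin n))) \ {e | e.IsDiag} = ↑t := by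
      ext e
      constructor
      · rintro ⟨h1, _⟩; exact h1
      · intro het
        exact ⟨het, fun hdiag => SimpleGraph.not_isDiag_of_mem_edgeSet D
          (SimpleGraph.mem_edgeFinset.1 (ht het)) hdiag⟩
    apply Finset.coe_injective
    simp only [SimpleGraph.coe_edgeFinset, SimpleGraph.edgeSet_fromEdgeSet]
    exact hd
  · intro W hW
    simp only [Finset.mem_filter, Finset.mem_univ, true_and] at hW
    simp only [edgeCount_eq_card, Finset.card_sdiff_of_subset (SimpleGraph.edgeFinset_mono hW)]

lemma sum_interval {n : ℕ} (p q : ℝ) (H D : Graph n) (hd : Disjoint H D) :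
    ∑ G : Graph n, (if H ≤ G ∧ G ≤ H ⊔ D then
        p ^ edgeCount G * q ^ (edgeCount H + edgeCount D - edgeCount G) else 0)
      = p ^ edgeCount H * (p + q) ^ edgeCount D := by
  classical
  have key : ∑ G : Graph n, (if H ≤ G ∧ G ≤ H ⊔ D then
        p ^ edgeCount G * q ^ (edgeCount H + edgeCount D - edgeCount G) else 0)
      = ∑ W : Graph n, (if W ≤ D then
        p ^ edgeCount H * (p ^ edgeCount W * q ^ (edgeCount D - edgeCount W)) else 0) := by
    rw [← Finset.sum_filter, ← Finset.sum_filter]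
    refine Finset.sum_bij' (fun (G : Graph n) _ => G \ H) (fun (W : Graph n) _ => H ⊔ W)
      ?_ ?_ ?_ ?_ ?_
    · intro G hG
      simp only [Finset.mem_filter, Finset.mem_univ, true_and] at hG ⊢
      have := sdiff_le_sdiff_right (c := H) hG.2
      rwa [hd.sup_sdiff_cancel_left] at this
    · intro W hW
      simp only [Finset.mem_filter, Finset.mem_univ, true_and] at hW ⊢
      exact ⟨le_sup_left, sup_le_sup_left hW H⟩
    · intro G hG
      simp only [Finset.mem_filter, Finset.mem_univ, true_and] at hG
      show H ⊔ (G \ H) = G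
      exact sup_sdiff_cancel_right hG.1
    · intro W hW
      simp only [Finset.mem_filter, Finset.mem_univ, true_and] at hW
      exact (hd.mono_right hW).sup_sdiff_cancel_left
    · intro G hG
      simp only [Finset.mem_filter, Finset.mem_univ, true_and] at hG
      obtain ⟨h1, h2⟩ := hG
      have hdisj : Disjoint H (G \ H) := disjoint_sdiff_self_right
      have hG_eq : H ⊔ (G \ H) = G := sup_sdiff_cancel_right h1
      have he : edgeCount G = edgeCount H + edgeCount (G \ H) := by
        rw [← hG_eq, edgeCount_sup_disjoint hdisj, hG_eq]
      rw [he, pow_add]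
      have : edgeCount H + edgeCount D - (edgeCount H + edgeCount (G \ H))
          = edgeCount D - edgeCount (G \ H) := by omega
      rw [this]; ring
  rw [key, ← Finset.sum_filter, ← Finset.mul_sum, Finset.sum_filter, sum_le_pow]

lemma sum_ge_P0 {n : ℕ} (p : ℝ) (H : Graph n) :
    ∑ G : Graph n, (if H ≤ G then P0 n p G else 0) = p ^ edgeCount H := by
  classical
  have hd : Disjoint H Hᶜ := disjoint_compl_right
  have hsum : H ⊔ Hᶜ = ⊤ := sup_compl_eq_top
  have hC : edgeCount H + edgeCount (Hᶜ : Graph n) = n.choose 2 := by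
    rw [← edgeCount_sup_disjoint hd, hsum, edgeCount_top]
  have key := sum_interval p (1 - p) H (Hᶜ) hd
  rw [hsum] at key
  have e1 : ∀ G : Graph n, (if H ≤ G ∧ G ≤ ⊤ then
        p ^ edgeCount G * (1-p) ^ (edgeCount H + edgeCount (Hᶜ : Graph n) - edgeCount G) else 0)
      = (if H ≤ G then P0 n p G else 0) := by
    intro G
    rw [hC]
    simp only [le_top, and_true, P0]
  rw [Finset.sum_congr rfl (fun G _ => e1 G)] at key
  rw [key]
  norm_num

lemma sum_P0 {n : ℕ} (p : ℝ) : ∑ G : Graph n, P0 n p G = 1 := by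
  have h := sum_ge_P0 (n := n) p ⊥
  simp only [bot_le, if_true, edgeCount_bot, pow_zero] at h
  exact h

lemma P0_nonneg {n : ℕ} {p : ℝ} (hp0 : 0 ≤ p) (hp1 : p ≤ 1) (G : Graph n) : 0 ≤ P0 n p G :=
  mul_nonneg (pow_nonneg hp0 _) (pow_nonneg (by linarith) _)

lemma P0_pos {n : ℕ} {p : ℝ} (hp0 : 0 < p) (hp1 : p < 1) (G : Graph n) : 0 < P0 n p G :=
  mul_pos (pow_pos hp0 _) (pow_pos (by linarith) _)

lemma sup_eq_iff {n : ℕ} (Hs G G0 : Graph n) :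
    G0 ⊔ Hs = G ↔ (Hs ≤ G ∧ (G \ Hs ≤ G0 ∧ G0 ≤ (G \ Hs) ⊔ Hs)) := by
  constructor
  · intro h
    have h1 : Hs ≤ G := le_sup_right.trans_eq h
    have h2 : G0 ≤ G := le_sup_left.trans_eq h
    refine ⟨h1, ?_, ?_⟩
    · rw [← h]; exact sdiff_le_iff.2 (le_of_eq (sup_comm G0 Hs))
    · rw [sdiff_sup_cancel h1]; exact h2
  · rintro ⟨h1, h2, h3⟩
    rw [sdiff_sup_cancel h1] at h3
    apply le_antisymm
    · exact sup_le h3 h1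
    · calc G = (G \ Hs) ⊔ Hs := (sdiff_sup_cancel h1).symm
        _ ≤ G0 ⊔ Hs := sup_le_sup_right h2 Hs

lemma sum_planted {n : ℕ} (p : ℝ) (Hs G : Graph n) (hp0 : p ≠ 0) :
    ∑ G0 : Graph n, (if G0 ⊔ Hs = G then P0 n p G0 else 0)
      = if Hs ≤ G then P0 n p G / p ^ edgeCount Hs else 0 := by
  classical
  by_cases hle : Hs ≤ G
  · rw [if_pos hle]
    have hd : Disjoint (G \ Hs) Hs := disjoint_sdiff_self_left
    have hG_eq : (G \ Hs) ⊔ Hs = G := sdiff_sup_cancel hle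
    have he : edgeCount (G \ Hs) + edgeCount Hs = edgeCount G := by
      rw [← edgeCount_sup_disjoint hd, hG_eq]
    have key := sum_interval p (1 - p) (G \ Hs) Hs hd
    -- rewrite each term
    have e1 : ∀ G0 : Graph n, (if G0 ⊔ Hs = G then P0 n p G0 else 0)
        = (1 - p) ^ (n.choose 2 - edgeCount G) * (if G \ Hs ≤ G0 ∧ G0 ≤ (G \ Hs) ⊔ Hs then
            p ^ edgeCount G0 * (1-p) ^ (edgeCount (G \ Hs) + edgeCount Hs - edgeCount G0) else 0) := by
      intro G0
      by_cases hc : G0 ⊔ Hs = G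
      · rw [if_pos hc, if_pos (((sup_eq_iff Hs G G0).1 hc).2)]
        have hG0le : G0 ≤ G := le_sup_left.trans_eq hc
        have h1 : edgeCount G0 ≤ edgeCount G := edgeCount_mono hG0le
        have h2 : edgeCount G ≤ n.choose 2 := edgeCount_le G
        rw [P0, he]
        rw [show n.choose 2 - edgeCount G0 = (n.choose 2 - edgeCount G) + (edgeCount G - edgeCount G0) by omega]
        rw [pow_add]; ring
      · rw [if_neg hc, if_neg, mul_zero]
        intro hcon
        exact hc (((sup_eq_iff Hs G G0).2 ⟨hle, hcon⟩))
    rw [Finset.sum_congr rfl (fun G0 _ => e1 G0), ← Finset.mul_sum, key]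
    have : p + (1 - p) = 1 := by ring
    rw [this, one_pow, mul_one]
    rw [P0]
    have h1 : edgeCount Hs ≤ edgeCount G := edgeCount_mono hle
    rw [show edgeCount (G \ Hs) = edgeCount G - edgeCount Hs by omega]
    rw [eq_div_iff (pow_ne_zero _ hp0)]
    rw [show edgeCount G = (edgeCount G - edgeCount Hs) + edgeCount Hs by omega, pow_add,
      Nat.add_sub_cancel]
    ring
  · rw [if_neg hle]
    apply Finset.sum_eq_zero
    intro G0 _
    rw [if_neg]
    intro hc
    exact hle (le_sup_right.trans_eq hc)

lemma edgeSet_map' {V W : Type*} (f : V ↪ W) (Γ : SimpleGraph V) :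
    (Γ.map f).edgeSet = Sym2.map f '' Γ.edgeSet := by
  ext e
  induction e with
  | _ a b =>
    simp only [SimpleGraph.mem_edgeSet, SimpleGraph.map_adj, Set.mem_image]
    constructor
    · rintro ⟨u, v, hadj, hu, hv⟩
      refine ⟨s(u, v), hadj, ?_⟩
      rw [Sym2.map_pair_eq, hu, hv]
    · rintro ⟨e', he', hmap⟩
      induction e' with
      | _ u v =>
        rw [Sym2.map_pair_eq, Sym2.eq_iff] at hmap
        rcases hmap with ⟨hu, hv⟩ | ⟨hu, hv⟩
        · exact ⟨u, v, he', hu, hv⟩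
        · exact ⟨v, u, he'.symm, hv, hu⟩

lemma map_edgeCount {n : ℕ} {V : Type*} (Γ : SimpleGraph V) (σ : V ↪ Fin n) :
    edgeCount (Γ.map σ) = Γ.edgeSet.ncard := by
  rw [edgeCount, edgeSet_map', Set.ncard_image_of_injective _ (Sym2.map.injective σ.injective)]

section Model

variable {n : ℕ} {V : Type*} [Fintype V]

/-- number of embedded copies of `Γ` lying below `G` -/
noncomputable def Xt (Γ : SimpleGraph V) (G : Graph n) : ℕ :=
  (Finset.univ.filter fun σ : V ↪ Fin n => Γ.map σ ≤ G).card

lemma Xt_cast (Γ : SimpleGraph V) (G : Graph n) :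
    (Xt Γ G : ℝ) = ∑ σ : V ↪ Fin n, (if Γ.map σ ≤ G then (1:ℝ) else 0) := by
  rw [Xt, Finset.card_filter]
  push_cast
  rfl

lemma P1_eq (Γ : SimpleGraph V) {p : ℝ} (hp : p ≠ 0) (G : Graph n) :
    P1 n p Γ G = (Xt Γ G : ℝ) * P0 n p G /
      (p ^ Γ.edgeSet.ncard * (Fintype.card (V ↪ Fin n) : ℝ)) := by
  rw [P1]
  have h1 : ∀ σ : V ↪ Fin n, (∑ G0 : Graph n, if G0 ⊔ Γ.map σ = G then P0 n p G0 else 0)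
      = if Γ.map σ ≤ G then P0 n p G / p ^ Γ.edgeSet.ncard else 0 := by
    intro σ
    rw [sum_planted p (Γ.map σ) G hp, map_edgeCount]
  rw [Finset.sum_congr rfl (fun σ _ => h1 σ)]
  rw [← Finset.sum_filter, Finset.sum_const, nsmul_eq_mul, ← Xt]
  rw [← mul_div_assoc, div_div]

lemma LR_eq (Γ : SimpleGraph V) {p : ℝ} (hp0 : 0 < p) (hp1 : p < 1) (G : Graph n) :
    LR n p Γ G = (Xt Γ G : ℝ) / (p ^ Γ.edgeSet.ncard * (Fintype.card (V ↪ Fin n) : ℝ)) := by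
  rw [LR, P1_eq Γ (ne_of_gt hp0) G, div_div,
    mul_div_mul_right _ _ (ne_of_gt (P0_pos hp0 hp1 G))]

lemma sum_Xt_P0 (Γ : SimpleGraph V) (p : ℝ) :
    ∑ G : Graph n, (Xt Γ G : ℝ) * P0 n p G
      = (Fintype.card (V ↪ Fin n) : ℝ) * p ^ Γ.edgeSet.ncard := by
  have h : ∀ G : Graph n, (Xt Γ G : ℝ) * P0 n p G
      = ∑ σ : V ↪ Fin n, (if Γ.map σ ≤ G then P0 n p G else 0) := by
    intro G
    rw [Xt_cast, Finset.sum_mul]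
    congr 1; ext σ
    by_cases h : Γ.map σ ≤ G <;> simp [h]
  rw [Finset.sum_congr rfl (fun G _ => h G), Finset.sum_comm]
  rw [Finset.sum_congr rfl (fun σ _ => by rw [sum_ge_P0 p (Γ.map σ), map_edgeCount])]
  rw [Finset.sum_const, nsmul_eq_mul, Fintype.card]

lemma sum_Xt_sq_P0 (Γ : SimpleGraph V) (p : ℝ) :
    ∑ G : Graph n, (Xt Γ G : ℝ) ^ 2 * P0 n p G
      = ∑ σ : V ↪ Fin n, ∑ σ' : V ↪ Fin n, p ^ edgeCount (Γ.map σ ⊔ Γ.map σ') := by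
  have h : ∀ G : Graph n, (Xt Γ G : ℝ) ^ 2 * P0 n p G
      = ∑ σ : V ↪ Fin n, ∑ σ' : V ↪ Fin n,
          (if Γ.map σ ⊔ Γ.map σ' ≤ G then P0 n p G else 0) := by
    intro G
    rw [sq, Xt_cast, Finset.sum_mul_sum]
    rw [Finset.sum_mul]
    congr 1; ext σ
    rw [Finset.sum_mul]
    congr 1; ext σ'
    by_cases h1 : Γ.map σ ≤ G <;> by_cases h2 : Γ.map σ' ≤ G <;>
      simp [h1, h2, sup_le_iff]
  rw [Finset.sum_congr rfl (fun G _ => h G), Finset.sum_comm]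
  refine Finset.sum_congr rfl (fun σ _ => ?_)
  rw [Finset.sum_comm]
  refine Finset.sum_congr rfl (fun σ' _ => ?_)
  rw [sum_ge_P0 p (Γ.map σ ⊔ Γ.map σ')]

lemma sum_W_P0 (Γ : SimpleGraph V) (p : ℝ) :
    ∑ G : Graph n, P0 n p G * (∑ σ : V ↪ Fin n, ∑ σ' : V ↪ Fin n,
        if Γ.map σ ≤ G ∧ Γ.map σ' ≤ G then ((plantedSet σ ∩ plantedSet σ').card : ℝ) else 0)
      = ∑ σ : V ↪ Fin n, ∑ σ' : V ↪ Fin n,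
          ((plantedSet σ ∩ plantedSet σ').card : ℝ) * p ^ edgeCount (Γ.map σ ⊔ Γ.map σ') := by
  have h : ∀ G : Graph n, P0 n p G * (∑ σ : V ↪ Fin n, ∑ σ' : V ↪ Fin n,
        if Γ.map σ ≤ G ∧ Γ.map σ' ≤ G then ((plantedSet σ ∩ plantedSet σ').card : ℝ) else 0)
      = ∑ σ : V ↪ Fin n, ∑ σ' : V ↪ Fin n,
          ((plantedSet σ ∩ plantedSet σ').card : ℝ) *
            (if Γ.map σ ⊔ Γ.map σ' ≤ G then P0 n p G else 0) := by
    intro G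
    rw [Finset.mul_sum]
    refine Finset.sum_congr rfl (fun σ _ => ?_)
    rw [Finset.mul_sum]
    refine Finset.sum_congr rfl (fun σ' _ => ?_)
    by_cases h1 : Γ.map σ ⊔ Γ.map σ' ≤ G
    · rw [if_pos h1, if_pos (sup_le_iff.1 h1), mul_comm]
    · rw [if_neg h1, if_neg (fun hc => h1 (sup_le_iff.2 hc)), mul_zero, mul_zero]
  rw [Finset.sum_congr rfl (fun G _ => h G), Finset.sum_comm]
  refine Finset.sum_congr rfl (fun σ _ => ?_)
  rw [Finset.sum_comm]
  refine Finset.sum_congr rfl (fun σ' _ => ?_)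
  rw [← Finset.mul_sum, sum_ge_P0 p (Γ.map σ ⊔ Γ.map σ')]

lemma overlap_eq (Γ : SimpleGraph V) {p : ℝ} (hp : p ≠ 0)
    (kHat : Graph n → Finset (Fin n)) :
    overlap n p Γ kHat = (∑ G : Graph n, P0 n p G *
        (∑ σ : V ↪ Fin n, if Γ.map σ ≤ G then ((kHat G ∩ plantedSet σ).card : ℝ) else 0))
      / (p ^ Γ.edgeSet.ncard * (Fintype.card (V ↪ Fin n) : ℝ)) := by
  rw [overlap]
  have h1 : ∀ σ : V ↪ Fin n, ∑ G0 : Graph n,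
        P0 n p G0 * ((kHat (G0 ⊔ Γ.map σ) ∩ plantedSet σ).card : ℝ)
      = ∑ G : Graph n, (if Γ.map σ ≤ G then
          P0 n p G / p ^ Γ.edgeSet.ncard * ((kHat G ∩ plantedSet σ).card : ℝ) else 0) := by
    intro σ
    have h2 : ∀ G0 : Graph n, P0 n p G0 * ((kHat (G0 ⊔ Γ.map σ) ∩ plantedSet σ).card : ℝ)
        = ∑ G : Graph n, (if G0 ⊔ Γ.map σ = G then
            P0 n p G0 * ((kHat G ∩ plantedSet σ).card : ℝ) else 0) := by
      intro G0
      rw [Finset.sum_ite_eq Finset.univ (G0 ⊔ Γ.map σ)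
        (fun G => P0 n p G0 * ((kHat G ∩ plantedSet σ).card : ℝ))]
      simp
    rw [Finset.sum_congr rfl (fun G0 _ => h2 G0), Finset.sum_comm]
    refine Finset.sum_congr rfl (fun G _ => ?_)
    have : ∑ G0 : Graph n, (if G0 ⊔ Γ.map σ = G then
          P0 n p G0 * ((kHat G ∩ plantedSet σ).card : ℝ) else 0)
        = (∑ G0 : Graph n, if G0 ⊔ Γ.map σ = G then P0 n p G0 else 0)
            * ((kHat G ∩ plantedSet σ).card : ℝ) := by
      rw [Finset.sum_mul]
      refine Finset.sum_congr rfl (fun G0 _ => ?_)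
      by_cases hc : G0 ⊔ Γ.map σ = G <;> simp [hc]
    rw [this, sum_planted p (Γ.map σ) G hp, map_edgeCount]
    by_cases hc : Γ.map σ ≤ G <;> simp [hc]
  rw [Finset.sum_congr rfl (fun σ _ => h1 σ), Finset.sum_comm]
  have hnum : (∑ G : Graph n, ∑ σ : V ↪ Fin n, if Γ.map σ ≤ G then
        P0 n p G / p ^ Γ.edgeSet.ncard * ((kHat G ∩ plantedSet σ).card : ℝ) else 0)
      = (∑ G : Graph n, P0 n p G * (∑ σ : V ↪ Fin n,
          if Γ.map σ ≤ G then ((kHat G ∩ plantedSet σ).card : ℝ) else 0)) / p ^ Γ.edgeSet.ncard := by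
    rw [Finset.sum_div]
    refine Finset.sum_congr rfl (fun G _ => ?_)
    rw [Finset.mul_sum, Finset.sum_div]
    refine Finset.sum_congr rfl (fun σ _ => ?_)
    by_cases hc : Γ.map σ ≤ G
    · rw [if_pos hc, if_pos hc]; ring
    · simp [hc]
  rw [hnum, div_div]

/-- number of embeddings whose image contains `i` -/
noncomputable def cnt (V : Type*) [Fintype V] (n : ℕ) (i : Fin n) : ℕ :=
  (Finset.univ.filter fun σ : V ↪ Fin n => i ∈ plantedSet σ).card

lemma mem_plantedSet {n : ℕ} {V : Type*} [Fintype V] {i : Fin n} {σ : V ↪ Fin n} :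
    i ∈ plantedSet σ ↔ ∃ v, σ v = i := by
  simp [plantedSet]

lemma cnt_swap {n : ℕ} {V : Type*} [Fintype V] (i j : Fin n) : cnt V n i = cnt V n j := by
  classical
  refine Finset.card_bij' (fun σ _ => σ.trans (Equiv.swap i j).toEmbedding)
    (fun σ _ => σ.trans (Equiv.swap i j).toEmbedding) ?_ ?_ ?_ ?_
  · intro σ hσ
    rw [Finset.mem_filter] at hσ ⊢
    refine ⟨Finset.mem_univ _, ?_⟩
    rw [mem_plantedSet] at hσ ⊢
    obtain ⟨v, hv⟩ := hσ.2
    refine ⟨v, ?_⟩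
    simp [Function.Embedding.trans_apply, hv, Equiv.swap_apply_left]
  · intro σ hσ
    rw [Finset.mem_filter] at hσ ⊢
    refine ⟨Finset.mem_univ _, ?_⟩
    rw [mem_plantedSet] at hσ ⊢
    obtain ⟨v, hv⟩ := hσ.2
    refine ⟨v, ?_⟩
    simp [Function.Embedding.trans_apply, hv, Equiv.swap_apply_right]
  · intro σ _
    ext v
    simp [Function.Embedding.trans_apply]
  · intro σ _
    ext v
    simp [Function.Embedding.trans_apply]

lemma cnt_mul {n : ℕ} {V : Type*} [Fintype V] (i : Fin n) :
    n * cnt V n i = Fintype.card (V ↪ Fin n) * Fintype.card V := by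
  have h1 : ∀ j : Fin n, cnt V n j
      = ∑ σ : V ↪ Fin n, (if j ∈ plantedSet σ then 1 else 0) := by
    intro j
    rw [cnt, Finset.card_filter]
  have hsum : ∑ j : Fin n, cnt V n j = Fintype.card (V ↪ Fin n) * Fintype.card V := by
    rw [Finset.sum_congr rfl (fun j _ => h1 j), Finset.sum_comm]
    have h2 : ∀ σ : V ↪ Fin n, ∑ j : Fin n, (if j ∈ plantedSet σ then 1 else 0)
        = Fintype.card V := by
      intro σ
      rw [← Finset.card_filter]
      rw [show Finset.univ.filter (fun j => j ∈ plantedSet σ) = plantedSet σ from by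
        ext j; simp]
      rw [plantedSet, Finset.card_map, Finset.card_univ]
    rw [Finset.sum_congr rfl (fun σ _ => h2 σ), Finset.sum_const, Finset.card_univ,
      smul_eq_mul, mul_comm]
  calc n * cnt V n i = ∑ _j : Fin n, cnt V n i := by
        rw [Finset.sum_const, Finset.card_univ, Fintype.card_fin, smul_eq_mul]
    _ = ∑ j : Fin n, cnt V n j := Finset.sum_congr rfl (fun j _ => cnt_swap i j)
    _ = _ := hsum

lemma sum_pair_inter {n : ℕ} {V : Type*} [Fintype V] (hn : 0 < n) :
    ∑ σ : V ↪ Fin n, ∑ σ' : V ↪ Fin n, ((plantedSet σ ∩ plantedSet σ').card : ℝ)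
      = (Fintype.card (V ↪ Fin n) : ℝ)^2 * (Fintype.card V : ℝ)^2 / n := by
  classical
  have key : ∀ σ σ' : V ↪ Fin n, ((plantedSet σ ∩ plantedSet σ').card : ℝ)
      = ∑ i : Fin n, (if i ∈ plantedSet σ then (1:ℝ) else 0)
          * (if i ∈ plantedSet σ' then (1:ℝ) else 0) := by
    intro σ σ'
    rw [show plantedSet σ ∩ plantedSet σ'
        = Finset.univ.filter (fun i => i ∈ plantedSet σ ∧ i ∈ plantedSet σ') from by
      ext i; simp, Finset.card_filter]
    push_cast
    refine Finset.sum_congr rfl (fun i _ => ?_)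
    by_cases h1 : i ∈ plantedSet σ <;> by_cases h2 : i ∈ plantedSet σ' <;> simp [h1, h2]
  have hcntR : ∀ i : Fin n, (∑ σ : V ↪ Fin n, if i ∈ plantedSet σ then (1:ℝ) else 0)
      = (cnt V n i : ℝ) := by
    intro i
    rw [cnt, Finset.card_filter]
    push_cast
    rfl
  have step : ∑ σ : V ↪ Fin n, ∑ σ' : V ↪ Fin n, ((plantedSet σ ∩ plantedSet σ').card : ℝ)
      = ∑ i : Fin n, (cnt V n i : ℝ) * (cnt V n i : ℝ) := by
    rw [Finset.sum_congr rfl (fun σ _ => Finset.sum_congr rfl (fun σ' _ => key σ σ'))]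
    rw [Finset.sum_congr rfl (fun σ _ => Finset.sum_comm)]
    rw [Finset.sum_comm]
    refine Finset.sum_congr rfl (fun i _ => ?_)
    rw [← hcntR i, ← Finset.sum_mul_sum]
  rw [step]
  have hval : ∀ i : Fin n, (cnt V n i : ℝ)
      = (Fintype.card (V ↪ Fin n) : ℝ) * (Fintype.card V : ℝ) / n := by
    intro i
    have h' : (n : ℝ) * (cnt V n i : ℝ)
        = (Fintype.card (V ↪ Fin n) : ℝ) * (Fintype.card V : ℝ) := by
      exact_mod_cast congrArg Nat.cast (cnt_mul (n := n) (V := V) i)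
    have hn' : (n:ℝ) ≠ 0 := (Nat.cast_pos.2 hn).ne'
    rw [eq_div_iff hn']
    linarith
  rw [Finset.sum_congr rfl (fun i _ => by rw [hval i])]
  rw [Finset.sum_const, Finset.card_univ, Fintype.card_fin, nsmul_eq_mul]
  have hn' : (n:ℝ) ≠ 0 := (Nat.cast_pos.2 hn).ne'
  field_simp

noncomputable def YR {n : ℕ} {V : Type*} [Fintype V] (Γ : SimpleGraph V)
    (i : Fin n) (G : Graph n) : ℝ :=
  ∑ σ : V ↪ Fin n, if Γ.map σ ≤ G ∧ i ∈ plantedSet σ then (1:ℝ) else 0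

lemma YR_nonneg {n : ℕ} {V : Type*} [Fintype V] (Γ : SimpleGraph V) (i : Fin n)
    (G : Graph n) : 0 ≤ YR Γ i G :=
  Finset.sum_nonneg (fun σ _ => by positivity)

lemma card_inter_eq_sum {n : ℕ} {V : Type*} [Fintype V] (σ σ' : V ↪ Fin n) :
    ((plantedSet σ ∩ plantedSet σ').card : ℝ)
      = ∑ i : Fin n, (if i ∈ plantedSet σ then (1:ℝ) else 0)
          * (if i ∈ plantedSet σ' then (1:ℝ) else 0) := by
  classical
  rw [show plantedSet σ ∩ plantedSet σ'
      = Finset.univ.filter (fun i => i ∈ plantedSet σ ∧ i ∈ plantedSet σ') from by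
    ext i; simp, Finset.card_filter]
  push_cast
  refine Finset.sum_congr rfl (fun i _ => ?_)
  by_cases h1 : i ∈ plantedSet σ <;> by_cases h2 : i ∈ plantedSet σ' <;> simp [h1, h2]

lemma W_eq_sum_sq {n : ℕ} {V : Type*} [Fintype V] (Γ : SimpleGraph V) (G : Graph n) :
    (∑ σ : V ↪ Fin n, ∑ σ' : V ↪ Fin n,
        if Γ.map σ ≤ G ∧ Γ.map σ' ≤ G then ((plantedSet σ ∩ plantedSet σ').card : ℝ) else 0)
      = ∑ i : Fin n, (YR Γ i G)^2 := by
  classical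
  have key : ∀ σ σ' : V ↪ Fin n,
      (if Γ.map σ ≤ G ∧ Γ.map σ' ≤ G then ((plantedSet σ ∩ plantedSet σ').card : ℝ) else 0)
        = ∑ i : Fin n, (if Γ.map σ ≤ G ∧ i ∈ plantedSet σ then (1:ℝ) else 0)
            * (if Γ.map σ' ≤ G ∧ i ∈ plantedSet σ' then (1:ℝ) else 0) := by
    intro σ σ'
    by_cases h1 : Γ.map σ ≤ G <;> by_cases h2 : Γ.map σ' ≤ G
    · rw [if_pos ⟨h1, h2⟩, card_inter_eq_sum σ σ']
      refine Finset.sum_congr rfl (fun i _ => ?_)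
      simp [h1, h2]
    · simp [h1, h2]
    · simp [h1, h2]
    · simp [h1, h2]
  rw [Finset.sum_congr rfl (fun σ _ => Finset.sum_congr rfl (fun σ' _ => key σ σ'))]
  rw [Finset.sum_congr rfl (fun σ _ => Finset.sum_comm)]
  rw [Finset.sum_comm]
  refine Finset.sum_congr rfl (fun i _ => ?_)
  rw [sq, YR, ← Finset.sum_mul_sum]

lemma card_inter_planted {n : ℕ} {V : Type*} [Fintype V] (s : Finset (Fin n))
    (σ : V ↪ Fin n) :
    ((s ∩ plantedSet σ).card : ℝ) = ∑ i ∈ s, (if i ∈ plantedSet σ then (1:ℝ) else 0) := by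
  classical
  rw [show s ∩ plantedSet σ = s.filter (fun i => i ∈ plantedSet σ) from by ext i; simp,
    Finset.card_filter]
  push_cast
  rfl

lemma S_eq {n : ℕ} {V : Type*} [Fintype V] (Γ : SimpleGraph V)
    (kHat : Graph n → Finset (Fin n)) (G : Graph n) :
    (∑ σ : V ↪ Fin n, if Γ.map σ ≤ G then ((kHat G ∩ plantedSet σ).card : ℝ) else 0)
      = ∑ i ∈ kHat G, YR Γ i G := by
  classical
  have key : ∀ σ : V ↪ Fin n,
      (if Γ.map σ ≤ G then ((kHat G ∩ plantedSet σ).card : ℝ) else 0)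
        = ∑ i ∈ kHat G, (if Γ.map σ ≤ G ∧ i ∈ plantedSet σ then (1:ℝ) else 0) := by
    intro σ
    by_cases h1 : Γ.map σ ≤ G
    · rw [if_pos h1, card_inter_planted (kHat G) σ]
      refine Finset.sum_congr rfl (fun i _ => ?_)
      simp [h1]
    · rw [if_neg h1]
      refine (Finset.sum_eq_zero (fun i _ => ?_)).symm
      rw [if_neg (fun hc => h1 hc.1)]
  rw [Finset.sum_congr rfl (fun σ _ => key σ), Finset.sum_comm]
  rfl

lemma S_le_sqrt {n : ℕ} {V : Type*} [Fintype V] (Γ : SimpleGraph V)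
    (kHat : Graph n → Finset (Fin n)) (G : Graph n)
    (hkc : (kHat G).card = Fintype.card V) :
    (∑ σ : V ↪ Fin n, if Γ.map σ ≤ G then ((kHat G ∩ plantedSet σ).card : ℝ) else 0)
      ≤ Real.sqrt ((Fintype.card V : ℝ) *
          (∑ σ : V ↪ Fin n, ∑ σ' : V ↪ Fin n,
            if Γ.map σ ≤ G ∧ Γ.map σ' ≤ G then ((plantedSet σ ∩ plantedSet σ').card : ℝ) else 0)) := by
  classical
  rw [S_eq Γ kHat G, W_eq_sum_sq Γ G]
  have hnn : (0:ℝ) ≤ ∑ i ∈ kHat G, YR Γ i G :=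
    Finset.sum_nonneg (fun i _ => YR_nonneg Γ i G)
  have hWnn : (0:ℝ) ≤ (Fintype.card V : ℝ) * ∑ i : Fin n, (YR Γ i G)^2 := by
    have : (0:ℝ) ≤ ∑ i : Fin n, (YR Γ i G)^2 :=
      Finset.sum_nonneg (fun i _ => sq_nonneg _)
    positivity
  rw [Real.le_sqrt hnn hWnn]
  calc (∑ i ∈ kHat G, YR Γ i G)^2
      ≤ (∑ i ∈ kHat G, (YR Γ i G)^2) * (∑ _i ∈ kHat G, (1:ℝ)^2) := by
        have h := Finset.sum_mul_sq_le_sq_mul_sq (kHat G) (fun i => YR Γ i G) (fun _ => (1:ℝ))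
        simpa using h
    _ = ((kHat G).card : ℝ) * (∑ i ∈ kHat G, (YR Γ i G)^2) := by
        rw [Finset.sum_const, one_pow, nsmul_eq_mul]
        ring
    _ ≤ (Fintype.card V : ℝ) * ∑ i : Fin n, (YR Γ i G)^2 := by
        rw [hkc]
        refine mul_le_mul_of_nonneg_left ?_ (by positivity)
        exact Finset.sum_le_sum_of_subset_of_nonneg (Finset.subset_univ _)
          (fun i _ _ => sq_nonneg _)

lemma S_le_kXt {n : ℕ} {V : Type*} [Fintype V] (Γ : SimpleGraph V)
    (kHat : Graph n → Finset (Fin n)) (G : Graph n)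
    (hkc : (kHat G).card = Fintype.card V) :
    (∑ σ : V ↪ Fin n, if Γ.map σ ≤ G then ((kHat G ∩ plantedSet σ).card : ℝ) else 0)
      ≤ (Fintype.card V : ℝ) * (Xt Γ G : ℝ) := by
  classical
  rw [Xt_cast, Finset.mul_sum]
  refine Finset.sum_le_sum (fun σ _ => ?_)
  by_cases h1 : Γ.map σ ≤ G
  · rw [if_pos h1, if_pos h1, mul_one]
    have : (kHat G ∩ plantedSet σ).card ≤ Fintype.card V := by
      calc (kHat G ∩ plantedSet σ).card ≤ (kHat G).card :=
            Finset.card_le_card (Finset.inter_subset_left)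
        _ = Fintype.card V := hkc
    exact_mod_cast this
  · simp [h1]

noncomputable def Sfun {n : ℕ} {V : Type*} [Fintype V] (Γ : SimpleGraph V)
    (kHat : Graph n → Finset (Fin n)) (G : Graph n) : ℝ :=
  ∑ σ : V ↪ Fin n, if Γ.map σ ≤ G then ((kHat G ∩ plantedSet σ).card : ℝ) else 0

noncomputable def Wfun {n : ℕ} {V : Type*} [Fintype V] (Γ : SimpleGraph V) (G : Graph n) : ℝ :=
  ∑ σ : V ↪ Fin n, ∑ σ' : V ↪ Fin n,
    if Γ.map σ ≤ G ∧ Γ.map σ' ≤ G then ((plantedSet σ ∩ plantedSet σ').card : ℝ) else 0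

lemma Wfun_nonneg {n : ℕ} {V : Type*} [Fintype V] (Γ : SimpleGraph V) (G : Graph n) :
    0 ≤ Wfun Γ G :=
  Finset.sum_nonneg fun σ _ => Finset.sum_nonneg fun σ' _ => by positivity

lemma Sfun_nonneg {n : ℕ} {V : Type*} [Fintype V] (Γ : SimpleGraph V)
    (kHat : Graph n → Finset (Fin n)) (G : Graph n) : 0 ≤ Sfun Γ kHat G :=
  Finset.sum_nonneg fun σ _ => by positivity

lemma sum_cs {ι : Type*} [Fintype ι] (f g : ι → ℝ) (hf : ∀ i, 0 ≤ f i) (hg : ∀ i, 0 ≤ g i) :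
    ∑ i : ι, f i * g i ≤ Real.sqrt (∑ i : ι, (f i)^2) * Real.sqrt (∑ i : ι, (g i)^2) := by
  have h0 : 0 ≤ ∑ i : ι, f i * g i :=
    Finset.sum_nonneg fun i _ => mul_nonneg (hf i) (hg i)
  have h1 : 0 ≤ ∑ i : ι, (f i)^2 := Finset.sum_nonneg fun i _ => sq_nonneg _
  have h2 : 0 ≤ ∑ i : ι, (g i)^2 := Finset.sum_nonneg fun i _ => sq_nonneg _
  rw [← Real.sqrt_mul h1]
  exact (Real.le_sqrt h0 (mul_nonneg h1 h2)).2 (Finset.sum_mul_sq_le_sq_mul_sq _ _ _)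

lemma sqrt_sq_mul_sq (a b c : ℝ) (ha : 0 ≤ a) (hb : 0 ≤ b) (hc : 0 ≤ c) :
    Real.sqrt (a^2 * c * b^2) = a * Real.sqrt c * b := by
  rw [Real.sqrt_mul (by positivity), Real.sqrt_mul (sq_nonneg a), Real.sqrt_sq ha,
    Real.sqrt_sq hb]

section MainBound

variable {n : ℕ} {V : Type*} [Fintype V]

lemma flat_sum (g : (V ↪ Fin n) → (V ↪ Fin n) → ℝ) :
    (∑ σ : V ↪ Fin n, ∑ σ' : V ↪ Fin n, g σ σ')
      = ∑ x : (V ↪ Fin n) × (V ↪ Fin n), g x.1 x.2 := by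
  rw [← Finset.univ_product_univ, Finset.sum_product]

lemma sum_Xt_sq_eq_A (Γ : SimpleGraph V) {p : ℝ} (hp0 : 0 < p) (hp1 : p < 1)
    (hN : 0 < Fintype.card (V ↪ Fin n)) :
    ∑ G : Graph n, (Xt Γ G : ℝ)^2 * P0 n p G
      = E0 n p (fun G => LR n p Γ G ^ 2) *
        (p ^ Γ.edgeSet.ncard * (Fintype.card (V ↪ Fin n) : ℝ))^2 := by
  have hNR : (0:ℝ) < (Fintype.card (V ↪ Fin n) : ℝ) := by exact_mod_cast hN
  have hpe : (0:ℝ) < p ^ Γ.edgeSet.ncard := pow_pos hp0 _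
  have h1 : E0 n p (fun G => LR n p Γ G ^ 2)
      = ∑ G : Graph n, P0 n p G *
          ((Xt Γ G : ℝ) / (p ^ Γ.edgeSet.ncard * (Fintype.card (V ↪ Fin n) : ℝ)))^2 := by
    rw [E0]
    exact Finset.sum_congr rfl (fun G _ => by rw [LR_eq Γ hp0 hp1 G])
  rw [h1, Finset.sum_mul]
  refine (Finset.sum_congr rfl (fun G _ => ?_)).symm
  have hMne : (p ^ Γ.edgeSet.ncard * (Fintype.card (V ↪ Fin n) : ℝ))^2 ≠ 0 := by positivity
  rw [mul_assoc, div_pow, div_mul_cancel₀ _ hMne]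
  ring

lemma var_eq (Γ : SimpleGraph V) {p : ℝ} (hp0 : 0 < p) (hp1 : p < 1)
    (hN : 0 < Fintype.card (V ↪ Fin n)) :
    ∑ G : Graph n, ((Xt Γ G : ℝ) - p ^ Γ.edgeSet.ncard * (Fintype.card (V ↪ Fin n) : ℝ))^2
        * P0 n p G
      = (E0 n p (fun G => LR n p Γ G ^ 2) - 1) *
        (p ^ Γ.edgeSet.ncard * (Fintype.card (V ↪ Fin n) : ℝ))^2 := by
  have e : ∀ G : Graph n,
      ((Xt Γ G : ℝ) - p ^ Γ.edgeSet.ncard * (Fintype.card (V ↪ Fin n) : ℝ))^2 * P0 n p G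
        = (Xt Γ G : ℝ)^2 * P0 n p G
          - 2 * (p ^ Γ.edgeSet.ncard * (Fintype.card (V ↪ Fin n) : ℝ)) * ((Xt Γ G : ℝ) * P0 n p G)
          + (p ^ Γ.edgeSet.ncard * (Fintype.card (V ↪ Fin n) : ℝ))^2 * P0 n p G := by
    intro G; ring
  rw [Finset.sum_congr rfl (fun G _ => e G), Finset.sum_add_distrib, Finset.sum_sub_distrib,
    ← Finset.mul_sum, ← Finset.mul_sum, sum_Xt_P0 Γ p, sum_P0 p,
    sum_Xt_sq_eq_A Γ hp0 hp1 hN]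
  ring

lemma one_le_A (Γ : SimpleGraph V) {p : ℝ} (hp0 : 0 < p) (hp1 : p < 1)
    (hN : 0 < Fintype.card (V ↪ Fin n)) :
    1 ≤ E0 n p (fun G => LR n p Γ G ^ 2) := by
  have hv := var_eq Γ hp0 hp1 hN
  have hnn : (0:ℝ) ≤ ∑ G : Graph n,
      ((Xt Γ G : ℝ) - p ^ Γ.edgeSet.ncard * (Fintype.card (V ↪ Fin n) : ℝ))^2 * P0 n p G :=
    Finset.sum_nonneg fun G _ => mul_nonneg (sq_nonneg _) (P0_nonneg hp0.le hp1.le G)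
  have hNR : (0:ℝ) < (Fintype.card (V ↪ Fin n) : ℝ) := by exact_mod_cast hN
  have hpe : (0:ℝ) < p ^ Γ.edgeSet.ncard := pow_pos hp0 _
  nlinarith [hv, hnn, mul_pos (mul_pos hpe hNR) (mul_pos hpe hNR)]

lemma cheb (Γ : SimpleGraph V) {p : ℝ} (hp0 : 0 < p) (hp1 : p < 1)
    (hN : 0 < Fintype.card (V ↪ Fin n)) :
    ∑ G : Graph n, (if 2*(Xt Γ G : ℝ) < p ^ Γ.edgeSet.ncard * (Fintype.card (V ↪ Fin n) : ℝ)
        then (1:ℝ) else 0) * P0 n p G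
      ≤ 4 * (E0 n p (fun G => LR n p Γ G ^ 2) - 1) := by
  have hNR : (0:ℝ) < (Fintype.card (V ↪ Fin n) : ℝ) := by exact_mod_cast hN
  have hpe : (0:ℝ) < p ^ Γ.edgeSet.ncard := pow_pos hp0 _
  set M := p ^ Γ.edgeSet.ncard * (Fintype.card (V ↪ Fin n) : ℝ) with hMdef
  have hM : 0 < M := mul_pos hpe hNR
  have pt : ∀ G : Graph n, (if 2*(Xt Γ G : ℝ) < M then (1:ℝ) else 0) * P0 n p G
      ≤ (4/M^2) * (((Xt Γ G : ℝ) - M)^2 * P0 n p G) := by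
    intro G
    have hP := P0_nonneg hp0.le hp1.le G
    by_cases hb : 2*(Xt Γ G : ℝ) < M
    · rw [if_pos hb, one_mul]
      have hx : (0:ℝ) ≤ (Xt Γ G : ℝ) := Nat.cast_nonneg _
      have h4 : M^2/4 ≤ ((Xt Γ G : ℝ) - M)^2 := by nlinarith [hx]
      have h5 : M^2/4 * P0 n p G ≤ ((Xt Γ G : ℝ) - M)^2 * P0 n p G :=
        mul_le_mul_of_nonneg_right h4 hP
      have h6 : (4/M^2) * (M^2/4 * P0 n p G) ≤ (4/M^2) * (((Xt Γ G : ℝ) - M)^2 * P0 n p G) :=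
        mul_le_mul_of_nonneg_left h5 (by positivity)
      calc P0 n p G = (4/M^2) * (M^2/4 * P0 n p G) := by field_simp
        _ ≤ _ := h6
    · rw [if_neg hb, zero_mul]
      positivity
  calc ∑ G : Graph n, (if 2*(Xt Γ G : ℝ) < M then (1:ℝ) else 0) * P0 n p G
      ≤ ∑ G : Graph n, (4/M^2) * (((Xt Γ G : ℝ) - M)^2 * P0 n p G) := Finset.sum_le_sum
        (fun G _ => pt G)
    _ = (4/M^2) * ∑ G : Graph n, ((Xt Γ G : ℝ) - M)^2 * P0 n p G := by
        rw [Finset.mul_sum]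
    _ = (4/M^2) * ((E0 n p (fun G => LR n p Γ G ^ 2) - 1) * M^2) := by
        rw [hMdef, var_eq Γ hp0 hp1 hN]
    _ = 4 * (E0 n p (fun G => LR n p Γ G ^ 2) - 1) := by field_simp

lemma esup_le (Γ : SimpleGraph V) (σ σ' : V ↪ Fin n) :
    edgeCount (Γ.map σ ⊔ Γ.map σ') ≤ 2 * Γ.edgeSet.ncard := by
  calc edgeCount (Γ.map σ ⊔ Γ.map σ') ≤ edgeCount (Γ.map σ) + edgeCount (Γ.map σ') :=
        edgeCount_sup_le _ _
    _ = 2 * Γ.edgeSet.ncard := by rw [map_edgeCount, map_edgeCount]; ring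

lemma sW_bound (Γ : SimpleGraph V) {p : ℝ} (hp0 : 0 < p) (hp1 : p < 1) (hn : 0 < n)
    (hN : 0 < Fintype.card (V ↪ Fin n)) :
    ∑ G : Graph n, P0 n p G * Wfun Γ G
      ≤ ((Fintype.card V : ℝ)^2/n + (Fintype.card V : ℝ) *
            (E0 n p (fun G => LR n p Γ G ^ 2) - 1)) *
        (p ^ Γ.edgeSet.ncard * (Fintype.card (V ↪ Fin n) : ℝ))^2 := by
  have hNR : (0:ℝ) < (Fintype.card (V ↪ Fin n) : ℝ) := by exact_mod_cast hN
  have hMsq : (p ^ Γ.edgeSet.ncard * (Fintype.card (V ↪ Fin n) : ℝ))^2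
      = p ^ (2 * Γ.edgeSet.ncard) * (Fintype.card (V ↪ Fin n) : ℝ)^2 := by
    rw [mul_pow, ← pow_mul, mul_comm Γ.edgeSet.ncard 2]
  have hS2 : (∑ σ : V ↪ Fin n, ∑ σ' : V ↪ Fin n, p ^ edgeCount (Γ.map σ ⊔ Γ.map σ'))
      = E0 n p (fun G => LR n p Γ G ^ 2) *
        (p ^ Γ.edgeSet.ncard * (Fintype.card (V ↪ Fin n) : ℝ))^2 := by
    rw [← sum_Xt_sq_P0 Γ p, sum_Xt_sq_eq_A Γ hp0 hp1 hN]
  have h0 : ∑ G : Graph n, P0 n p G * Wfun Γ G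
      = ∑ σ : V ↪ Fin n, ∑ σ' : V ↪ Fin n,
          ((plantedSet σ ∩ plantedSet σ').card : ℝ) * p ^ edgeCount (Γ.map σ ⊔ Γ.map σ') :=
    sum_W_P0 Γ p
  rw [h0, flat_sum]
  have pt : ∀ x : (V ↪ Fin n) × (V ↪ Fin n),
      ((plantedSet x.1 ∩ plantedSet x.2).card : ℝ) * p ^ edgeCount (Γ.map x.1 ⊔ Γ.map x.2)
        ≤ ((plantedSet x.1 ∩ plantedSet x.2).card : ℝ) * p ^ (2 * Γ.edgeSet.ncard)
          + (Fintype.card V : ℝ) *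
              (p ^ edgeCount (Γ.map x.1 ⊔ Γ.map x.2) - p ^ (2 * Γ.edgeSet.ncard)) := by
    intro x
    have hle : p ^ (2 * Γ.edgeSet.ncard) ≤ p ^ edgeCount (Γ.map x.1 ⊔ Γ.map x.2) :=
      pow_le_pow_of_le_one hp0.le hp1.le (esup_le Γ x.1 x.2)
    have hc : ((plantedSet x.1 ∩ plantedSet x.2).card : ℝ) ≤ (Fintype.card V : ℝ) := by
      have h : (plantedSet x.1 ∩ plantedSet x.2).card ≤ Fintype.card V := by
        calc (plantedSet x.1 ∩ plantedSet x.2).card ≤ (plantedSet x.1).card :=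
              Finset.card_le_card Finset.inter_subset_left
          _ = Fintype.card V := by rw [plantedSet, Finset.card_map, Finset.card_univ]
      exact_mod_cast h
    have hc0 : (0:ℝ) ≤ ((plantedSet x.1 ∩ plantedSet x.2).card : ℝ) := Nat.cast_nonneg _
    nlinarith [mul_le_mul_of_nonneg_right hc (sub_nonneg.2 hle), hc0]
  refine (Finset.sum_le_sum (fun x _ => pt x)).trans ?_
  rw [Finset.sum_add_distrib, ← Finset.sum_mul, ← Finset.mul_sum, Finset.sum_sub_distrib,
    Finset.sum_const, Finset.card_univ]
  have hcard : (Fintype.card ((V ↪ Fin n) × (V ↪ Fin n)) : ℝ)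
      = (Fintype.card (V ↪ Fin n) : ℝ)^2 := by
    rw [Fintype.card_prod]; push_cast; ring
  rw [nsmul_eq_mul, hcard]
  rw [← flat_sum (fun σ σ' => ((plantedSet σ ∩ plantedSet σ').card : ℝ)), sum_pair_inter hn]
  rw [← flat_sum (fun σ σ' => p ^ edgeCount (Γ.map σ ⊔ Γ.map σ')), hS2]
  apply le_of_eq
  rw [hMsq]
  ring

lemma overlap_bound {n : ℕ} {V : Type*} [Fintype V] (Γ : SimpleGraph V) {p : ℝ}
    (hp0 : 0 < p) (hp1 : p < 1) (hn : 0 < n)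
    (hVn : Fintype.card V ≤ n) (kHat : Graph n → Finset (Fin n))
    (hkc : ∀ G, (kHat G).card = Fintype.card V) :
    overlap n p Γ kHat
      ≤ 2 * (Fintype.card V : ℝ) *
          Real.sqrt (E0 n p (fun G => LR n p Γ G ^ 2) *
            ((Fintype.card V : ℝ) / n + (E0 n p (fun G => LR n p Γ G ^ 2) - 1)))
        + 2 * (Fintype.card V : ℝ) *
          Real.sqrt (E0 n p (fun G => LR n p Γ G ^ 2) *
            (E0 n p (fun G => LR n p Γ G ^ 2) - 1)) := by
  classical
  have hN : 0 < Fintype.card (V ↪ Fin n) :=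
    Fintype.card_pos_iff.2 (Function.Embedding.nonempty_of_card_le (by rwa [Fintype.card_fin]))
  have hNR : (0:ℝ) < (Fintype.card (V ↪ Fin n) : ℝ) := by exact_mod_cast hN
  have hpe : (0:ℝ) < p ^ Γ.edgeSet.ncard := pow_pos hp0 _
  have hnR : (0:ℝ) < (n:ℝ) := by exact_mod_cast hn
  have hP0 : ∀ G : Graph n, 0 ≤ P0 n p G := fun G => P0_nonneg hp0.le hp1.le G
  set A := E0 n p (fun G => LR n p Γ G ^ 2) with hAdef
  set M := p ^ Γ.edgeSet.ncard * (Fintype.card (V ↪ Fin n) : ℝ) with hMdef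
  set kR := (Fintype.card V : ℝ) with hkRdef
  clear_value A M kR
  have hM : 0 < M := by rw [hMdef]; exact mul_pos hpe hNR
  have hA1 : 1 ≤ A := by rw [hAdef]; exact one_le_A Γ hp0 hp1 hN
  have hA0 : 0 ≤ A := by linarith
  have hkR0 : (0:ℝ) ≤ kR := by rw [hkRdef]; exact Nat.cast_nonneg _
  have hc0 : 0 ≤ kR/n + (A-1) := by
    have := div_nonneg hkR0 hnR.le
    linarith
  -- key sums
  have hs2 : ∑ G : Graph n, (Xt Γ G : ℝ)^2 * P0 n p G = A * M^2 := by
    rw [hAdef, hMdef]; exact sum_Xt_sq_eq_A Γ hp0 hp1 hN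
  have hcheb : ∑ G : Graph n, (if 2*(Xt Γ G : ℝ) < M then (1:ℝ) else 0) * P0 n p G
      ≤ 4*(A-1) := by
    rw [hAdef, hMdef]; exact cheb Γ hp0 hp1 hN
  have hsW : ∑ G : Graph n, P0 n p G * Wfun Γ G ≤ (kR^2/n + kR*(A-1)) * M^2 := by
    rw [hAdef, hMdef, hkRdef]; exact sW_bound Γ hp0 hp1 hn hN
  have hov : overlap n p Γ kHat = (∑ G : Graph n, P0 n p G * Sfun Γ kHat G) / M := by
    rw [hMdef]; exact overlap_eq Γ (ne_of_gt hp0) kHat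
  -- the four auxiliary functions
  set f1 : Graph n → ℝ := fun G => Real.sqrt (P0 n p G * (kR * Wfun Γ G)) with hf1
  set g1 : Graph n → ℝ := fun G => Real.sqrt (P0 n p G) * (Xt Γ G : ℝ) with hg1
  set f2 : Graph n → ℝ := fun G =>
    (if 2*(Xt Γ G : ℝ) < M then (1:ℝ) else 0) * Real.sqrt (P0 n p G) with hf2
  set g2 : Graph n → ℝ := fun G => Real.sqrt (P0 n p G) * (kR * (Xt Γ G : ℝ)) with hg2
  clear_value f1 g1 f2 g2
  have hf1g1 : ∀ G : Graph n, f1 G * g1 G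
      = P0 n p G * (Real.sqrt (kR * Wfun Γ G) * (Xt Γ G : ℝ)) := by
    intro G
    simp only [hf1, hg1]
    calc Real.sqrt (P0 n p G * (kR * Wfun Γ G)) * (Real.sqrt (P0 n p G) * (Xt Γ G : ℝ))
        = (Real.sqrt (P0 n p G) * Real.sqrt (P0 n p G))
            * (Real.sqrt (kR * Wfun Γ G) * (Xt Γ G : ℝ)) := by
          rw [Real.sqrt_mul (hP0 G)]; ring
      _ = P0 n p G * (Real.sqrt (kR * Wfun Γ G) * (Xt Γ G : ℝ)) := by
          rw [Real.mul_self_sqrt (hP0 G)]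
  have hf2g2 : ∀ G : Graph n, f2 G * g2 G
      = (if 2*(Xt Γ G : ℝ) < M then (1:ℝ) else 0) * (P0 n p G * (kR * (Xt Γ G : ℝ))) := by
    intro G
    simp only [hf2, hg2]
    calc ((if 2*(Xt Γ G : ℝ) < M then (1:ℝ) else 0) * Real.sqrt (P0 n p G))
          * (Real.sqrt (P0 n p G) * (kR * (Xt Γ G : ℝ)))
        = (if 2*(Xt Γ G : ℝ) < M then (1:ℝ) else 0)
            * ((Real.sqrt (P0 n p G) * Real.sqrt (P0 n p G)) * (kR * (Xt Γ G : ℝ))) := by ring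
      _ = _ := by rw [Real.mul_self_sqrt (hP0 G)]
  -- pointwise bound
  have hpt : ∀ G : Graph n, P0 n p G * Sfun Γ kHat G
      ≤ (2/M) * (f1 G * g1 G) + f2 G * g2 G := by
    intro G
    have hW0 := Wfun_nonneg Γ G
    have hx : (0:ℝ) ≤ (Xt Γ G : ℝ) := Nat.cast_nonneg _
    by_cases hb : 2*(Xt Γ G : ℝ) < M
    · have h1 : P0 n p G * Sfun Γ kHat G ≤ f2 G * g2 G := by
        rw [hf2g2 G, if_pos hb, one_mul]
        have hS : Sfun Γ kHat G ≤ kR * (Xt Γ G : ℝ) := by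
          rw [hkRdef]; exact S_le_kXt Γ kHat G (hkc G)
        exact mul_le_mul_of_nonneg_left hS (hP0 G)
      have h2 : 0 ≤ (2/M) * (f1 G * g1 G) := by
        rw [hf1g1 G]
        exact mul_nonneg (div_nonneg (by norm_num) hM.le)
          (mul_nonneg (hP0 G) (mul_nonneg (Real.sqrt_nonneg _) hx))
      linarith
    · push_neg at hb
      have hSs : Sfun Γ kHat G ≤ Real.sqrt (kR * Wfun Γ G) := by
        rw [hkRdef]; exact S_le_sqrt Γ kHat G (hkc G)
      have h1 : P0 n p G * Sfun Γ kHat G ≤ P0 n p G * Real.sqrt (kR * Wfun Γ G) :=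
        mul_le_mul_of_nonneg_left hSs (hP0 G)
      have h3 : (1:ℝ) ≤ 2 * (Xt Γ G : ℝ) / M := (one_le_div hM).2 hb
      have h2 : P0 n p G * Real.sqrt (kR * Wfun Γ G) ≤ (2/M) * (f1 G * g1 G) := by
        rw [hf1g1 G]
        have h5 : P0 n p G * Real.sqrt (kR * Wfun Γ G) * 1
            ≤ P0 n p G * Real.sqrt (kR * Wfun Γ G) * (2 * (Xt Γ G : ℝ) / M) :=
          mul_le_mul_of_nonneg_left h3 (mul_nonneg (hP0 G) (Real.sqrt_nonneg _))
        calc P0 n p G * Real.sqrt (kR * Wfun Γ G)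
            = P0 n p G * Real.sqrt (kR * Wfun Γ G) * 1 := by ring
          _ ≤ P0 n p G * Real.sqrt (kR * Wfun Γ G) * (2 * (Xt Γ G : ℝ) / M) := h5
          _ = (2/M) * (P0 n p G * (Real.sqrt (kR * Wfun Γ G) * (Xt Γ G : ℝ))) := by
              field_simp [hM.ne']
      have h4 : 0 ≤ f2 G * g2 G := by
        rw [hf2g2 G, if_neg (not_lt.2 hb), zero_mul]
      linarith
  -- sum the pointwise bound
  have hsum : ∑ G : Graph n, P0 n p G * Sfun Γ kHat G
      ≤ (2/M) * (∑ G : Graph n, f1 G * g1 G) + ∑ G : Graph n, f2 G * g2 G := by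
    calc ∑ G : Graph n, P0 n p G * Sfun Γ kHat G
        ≤ ∑ G : Graph n, ((2/M) * (f1 G * g1 G) + f2 G * g2 G) :=
          Finset.sum_le_sum (fun G _ => hpt G)
      _ = _ := by rw [Finset.sum_add_distrib, Finset.mul_sum]
  -- Cauchy–Schwarz
  have hcs1 : ∑ G : Graph n, f1 G * g1 G
      ≤ Real.sqrt (∑ G : Graph n, (f1 G)^2) * Real.sqrt (∑ G : Graph n, (g1 G)^2) :=
    sum_cs f1 g1 (fun G => by simp only [hf1]; exact Real.sqrt_nonneg _)
      (fun G => by simp only [hg1]; exact mul_nonneg (Real.sqrt_nonneg _) (Nat.cast_nonneg _))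
  have hcs2 : ∑ G : Graph n, f2 G * g2 G
      ≤ Real.sqrt (∑ G : Graph n, (f2 G)^2) * Real.sqrt (∑ G : Graph n, (g2 G)^2) := by
    refine sum_cs f2 g2 (fun G => ?_) (fun G => ?_)
    · simp only [hf2]
      have : (0:ℝ) ≤ (if 2*(Xt Γ G : ℝ) < M then (1:ℝ) else 0) := by positivity
      exact mul_nonneg this (Real.sqrt_nonneg _)
    · simp only [hg2]
      exact mul_nonneg (Real.sqrt_nonneg _) (mul_nonneg hkR0 (Nat.cast_nonneg _))
  -- compute the four sums
  have hf1sq : ∑ G : Graph n, (f1 G)^2 = kR * ∑ G : Graph n, P0 n p G * Wfun Γ G := by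
    rw [Finset.mul_sum]
    refine Finset.sum_congr rfl (fun G _ => ?_)
    simp only [hf1]
    rw [Real.sq_sqrt (mul_nonneg (hP0 G) (mul_nonneg hkR0 (Wfun_nonneg Γ G)))]
    ring
  have hg1sq : ∑ G : Graph n, (g1 G)^2 = A * M^2 := by
    rw [← hs2]
    refine Finset.sum_congr rfl (fun G _ => ?_)
    simp only [hg1]
    rw [mul_pow, Real.sq_sqrt (hP0 G)]
    ring
  have hf2sq : ∑ G : Graph n, (f2 G)^2 ≤ 4*(A-1) := by
    refine le_trans (le_of_eq (Finset.sum_congr rfl (fun G _ => ?_))) hcheb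
    simp only [hf2]
    by_cases hb : 2*(Xt Γ G : ℝ) < M
    · rw [if_pos hb, one_mul, one_mul, Real.sq_sqrt (hP0 G)]
    · rw [if_neg hb, zero_mul, zero_mul]
      norm_num
  have hg2sq : ∑ G : Graph n, (g2 G)^2 = kR^2 * (A * M^2) := by
    rw [← hs2, Finset.mul_sum]
    refine Finset.sum_congr rfl (fun G _ => ?_)
    simp only [hg2]
    rw [mul_pow, Real.sq_sqrt (hP0 G)]
    ring
  -- bounds on square roots
  have hb1 : Real.sqrt (∑ G : Graph n, (f1 G)^2) ≤ kR * Real.sqrt (kR/n + (A-1)) * M := by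
    rw [hf1sq]
    have h5 : kR * ∑ G : Graph n, P0 n p G * Wfun Γ G ≤ kR^2 * (kR/n + (A-1)) * M^2 := by
      have h6 := mul_le_mul_of_nonneg_left hsW hkR0
      calc kR * ∑ G : Graph n, P0 n p G * Wfun Γ G
          ≤ kR * ((kR^2/n + kR*(A-1)) * M^2) := h6
        _ = kR^2 * (kR/n + (A-1)) * M^2 := by ring
    calc Real.sqrt (kR * ∑ G : Graph n, P0 n p G * Wfun Γ G)
        ≤ Real.sqrt (kR^2 * (kR/n + (A-1)) * M^2) := Real.sqrt_le_sqrt h5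
      _ = kR * Real.sqrt (kR/n + (A-1)) * M := sqrt_sq_mul_sq kR M _ hkR0 hM.le hc0
  have hb2 : Real.sqrt (∑ G : Graph n, (g1 G)^2) = Real.sqrt A * M := by
    rw [hg1sq, Real.sqrt_mul hA0, Real.sqrt_sq hM.le]
  have hb3 : Real.sqrt (∑ G : Graph n, (f2 G)^2) ≤ 2 * Real.sqrt (A-1) := by
    calc Real.sqrt (∑ G : Graph n, (f2 G)^2) ≤ Real.sqrt (4*(A-1)) := Real.sqrt_le_sqrt hf2sq
      _ = 2 * Real.sqrt (A-1) := by
          rw [show (4:ℝ)*(A-1) = 2^2*(A-1) by ring, Real.sqrt_mul (sq_nonneg 2),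
            Real.sqrt_sq (by norm_num : (0:ℝ) ≤ 2)]
  have hb4 : Real.sqrt (∑ G : Graph n, (g2 G)^2) = kR * (Real.sqrt A * M) := by
    rw [hg2sq, show kR^2 * (A * M^2) = kR^2 * A * M^2 from by ring,
      sqrt_sq_mul_sq kR M A hkR0 hM.le hA0]
    ring
  -- assemble
  have hT1 : (2/M) * (∑ G : Graph n, f1 G * g1 G)
      ≤ 2 * kR * Real.sqrt (A * (kR/n + (A-1))) * M := by
    have hstep : ∑ G : Graph n, f1 G * g1 G
        ≤ (kR * Real.sqrt (kR/n + (A-1)) * M) * (Real.sqrt A * M) := by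
      refine hcs1.trans ?_
      refine mul_le_mul hb1 (le_of_eq hb2) (Real.sqrt_nonneg _) ?_
      exact mul_nonneg (mul_nonneg hkR0 (Real.sqrt_nonneg _)) hM.le
    calc (2/M) * (∑ G : Graph n, f1 G * g1 G)
        ≤ (2/M) * ((kR * Real.sqrt (kR/n + (A-1)) * M) * (Real.sqrt A * M)) :=
          mul_le_mul_of_nonneg_left hstep (div_nonneg (by norm_num) hM.le)
      _ = 2 * kR * (Real.sqrt A * Real.sqrt (kR/n + (A-1))) * M := by
          field_simp [hM.ne']
      _ = 2 * kR * Real.sqrt (A * (kR/n + (A-1))) * M := by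
          rw [← Real.sqrt_mul hA0]
  have hT2 : ∑ G : Graph n, f2 G * g2 G ≤ 2 * kR * Real.sqrt (A * (A-1)) * M := by
    have hstep : ∑ G : Graph n, f2 G * g2 G
        ≤ (2 * Real.sqrt (A-1)) * (kR * (Real.sqrt A * M)) := by
      refine hcs2.trans ?_
      refine mul_le_mul hb3 (le_of_eq hb4) (Real.sqrt_nonneg _) ?_
      exact mul_nonneg (by norm_num) (Real.sqrt_nonneg _)
    calc ∑ G : Graph n, f2 G * g2 G ≤ (2 * Real.sqrt (A-1)) * (kR * (Real.sqrt A * M)) := hstep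
      _ = 2 * kR * (Real.sqrt A * Real.sqrt (A-1)) * M := by ring
      _ = 2 * kR * Real.sqrt (A * (A-1)) * M := by rw [← Real.sqrt_mul hA0]
  rw [hov, div_le_iff₀ hM]
  calc ∑ G : Graph n, P0 n p G * Sfun Γ kHat G
      ≤ (2/M) * (∑ G : Graph n, f1 G * g1 G) + ∑ G : Graph n, f2 G * g2 G := hsum
    _ ≤ 2 * kR * Real.sqrt (A * (kR/n + (A-1))) * M
        + 2 * kR * Real.sqrt (A * (A-1)) * M := add_le_add hT1 hT2
    _ = (2 * kR * Real.sqrt (A * (kR/n + (A-1)))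
        + 2 * kR * Real.sqrt (A * (A-1))) * M := by ring


lemma overlap_nonneg {n : ℕ} {V : Type*} [Fintype V] (Γ : SimpleGraph V) {p : ℝ}
    (hp0 : 0 ≤ p) (hp1 : p ≤ 1) (kHat : Graph n → Finset (Fin n)) :
    0 ≤ overlap n p Γ kHat := by
  rw [overlap]
  apply div_nonneg _ (Nat.cast_nonneg _)
  apply Finset.sum_nonneg; intro σ _
  apply Finset.sum_nonneg; intro G0 _
  exact mul_nonneg (P0_nonneg hp0 hp1 _) (Nat.cast_nonneg _)

theorem statement_4' (lam : ℝ) (hlam : 0 < lam) (K : ℕ → ℕ)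
    (Γ : (n : ℕ) → SimpleGraph (Fin (K n)))
    (hK : Tendsto (fun n => (K n : ℝ) / Real.sqrt n) atTop (nhds 0))
    (hL : Tendsto (fun n => E0 n (lam / n) (fun G => LR n (lam / n) (Γ n) G ^ 2))
      atTop (nhds 1))
    (kHat : (n : ℕ) → Graph n → Finset (Fin n))
    (hcard : ∀ᶠ n : ℕ in atTop, ∀ G : Graph n, (kHat n G).card = K n) :
    Tendsto (fun n => overlap n (lam / n) (Γ n) (kHat n) / K n) atTop (nhds 0) := by
  have hKn : Tendsto (fun n : ℕ => (K n : ℝ) / n) atTop (nhds 0) := by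
    apply squeeze_zero' (g := fun n : ℕ => (K n : ℝ) / Real.sqrt n)
    · filter_upwards [eventually_ge_atTop 1] with n hn
      positivity
    · filter_upwards [eventually_ge_atTop 1] with n hn
      have h1 : (1:ℝ) ≤ (n:ℝ) := by exact_mod_cast hn
      have hsp : 0 < Real.sqrt n := Real.sqrt_pos.2 (by linarith)
      have hs : Real.sqrt n ≤ (n:ℝ) := by
        have h2 := Real.sqrt_le_sqrt (show (n:ℝ) ≤ (n:ℝ)^2 by nlinarith)
        rwa [Real.sqrt_sq (by linarith)] at h2
      exact div_le_div_of_nonneg_left (Nat.cast_nonneg _) hsp hs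
    · exact hK
  have evlam : ∀ᶠ n : ℕ in atTop, lam < (n:ℝ) :=
    (tendsto_natCast_atTop_atTop (R := ℝ)).eventually_gt_atTop lam
  have evK : ∀ᶠ n : ℕ in atTop, K n ≤ n := by
    have h1 : ∀ᶠ n : ℕ in atTop, (K n : ℝ) / Real.sqrt n < 1 :=
      hK.eventually_lt_const one_pos
    filter_upwards [h1, eventually_ge_atTop 1] with n h hn1
    have hnR : (1:ℝ) ≤ (n:ℝ) := by exact_mod_cast hn1
    have hsp : 0 < Real.sqrt n := Real.sqrt_pos.2 (by linarith)
    have h2 : (K n : ℝ) < Real.sqrt n := by rwa [div_lt_one hsp] at h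
    have hs : Real.sqrt n ≤ (n:ℝ) := by
      have h3 := Real.sqrt_le_sqrt (show (n:ℝ) ≤ (n:ℝ)^2 by nlinarith)
      rwa [Real.sqrt_sq (by linarith)] at h3
    have h4 : (K n : ℝ) < (n:ℝ) := lt_of_lt_of_le h2 hs
    exact_mod_cast h4.le
  -- the vanishing upper bound
  have hgt : Tendsto (fun n : ℕ =>
      2 * Real.sqrt ((E0 n (lam / n) (fun G => LR n (lam / n) (Γ n) G ^ 2)) *
        ((K n : ℝ)/n + ((E0 n (lam / n) (fun G => LR n (lam / n) (Γ n) G ^ 2)) - 1)))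
      + 2 * Real.sqrt ((E0 n (lam / n) (fun G => LR n (lam / n) (Γ n) G ^ 2)) *
        ((E0 n (lam / n) (fun G => LR n (lam / n) (Γ n) G ^ 2)) - 1))) atTop (nhds 0) := by
    have t1 : Tendsto (fun n : ℕ =>
        (E0 n (lam / n) (fun G => LR n (lam / n) (Γ n) G ^ 2)) *
          ((K n : ℝ)/n + ((E0 n (lam / n) (fun G => LR n (lam / n) (Γ n) G ^ 2)) - 1)))
        atTop (nhds 0) := by
      have h := hL.mul (hKn.add (hL.sub_const 1))
      simpa using h
    have t2 : Tendsto (fun n : ℕ =>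
        (E0 n (lam / n) (fun G => LR n (lam / n) (Γ n) G ^ 2)) *
          ((E0 n (lam / n) (fun G => LR n (lam / n) (Γ n) G ^ 2)) - 1))
        atTop (nhds 0) := by
      have h := hL.mul (hL.sub_const 1)
      simpa using h
    have s1 := (Real.continuous_sqrt.tendsto 0).comp t1
    have s2 := (Real.continuous_sqrt.tendsto 0).comp t2
    rw [Real.sqrt_zero] at s1 s2
    have h := (s1.const_mul (2:ℝ)).add (s2.const_mul (2:ℝ))
    simpa using h
  apply squeeze_zero' _ _ hgt
  · filter_upwards [eventually_ge_atTop 1, evlam] with n h1 h2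
    have hn0 : (0:ℝ) < (n:ℝ) := by exact_mod_cast h1
    have hp0 : 0 ≤ lam / n := div_nonneg hlam.le hn0.le
    have hp1 : lam / n ≤ 1 := by
      rw [div_le_one hn0]; linarith
    exact div_nonneg (overlap_nonneg _ hp0 hp1 _) (Nat.cast_nonneg _)
  · filter_upwards [hcard, eventually_ge_atTop 1, evlam, evK] with n hc h1 h2 h3
    have hn : 0 < n := h1
    have hn0 : (0:ℝ) < (n:ℝ) := by exact_mod_cast h1
    have hp0 : 0 < lam / n := div_pos hlam hn0
    have hp1 : lam / n < 1 := by rw [div_lt_one hn0]; exact h2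
    by_cases hk : K n = 0
    · have hz : ((K n : ℕ) : ℝ) = 0 := by rw [hk]; norm_num
      rw [hz, div_zero]
      apply add_nonneg
      · exact mul_nonneg (by norm_num) (Real.sqrt_nonneg _)
      · exact mul_nonneg (by norm_num) (Real.sqrt_nonneg _)
    · have hk0 : (0:ℝ) < (K n : ℝ) := by
        exact_mod_cast Nat.pos_of_ne_zero hk
      have hb := overlap_bound (Γ n) hp0 hp1 hn
        (by rw [Fintype.card_fin]; exact h3) (kHat n)
        (fun G => by rw [Fintype.card_fin]; exact hc G)
      simp only [Fintype.card_fin] at hb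
      rw [div_le_iff₀ hk0]
      refine hb.trans (le_of_eq ?_)
      ring

end MainBound
end Model

/-- if `K = o(√n)`, `E0[X_Γ] = ω(1)` and `E0[L²] = 1 + o(1)`, then every
estimator `K̂` of the planted set has overlap `o(K)`: reconstruction fails. -/
theorem statement_4 (lam : ℝ) (hlam : 0 < lam) (K : ℕ → ℕ)
    (Γ : (n : ℕ) → SimpleGraph (Fin (K n)))
    (hK : Tendsto (fun n => (K n : ℝ) / Real.sqrt n) atTop (nhds 0))
    (hX : Tendsto (fun n => E0 n (lam / n) (fun G => (numCopies (Γ n) G : ℝ)))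
      atTop atTop)
    (hL : Tendsto (fun n => E0 n (lam / n) (fun G => LR n (lam / n) (Γ n) G ^ 2))
      atTop (nhds 1))
    (kHat : (n : ℕ) → Graph n → Finset (Fin n))
    (hcard : ∀ᶠ n : ℕ in atTop, ∀ G : Graph n, (kHat n G).card = K n) :
    Tendsto (fun n => overlap n (lam / n) (Γ n) (kHat n) / K n) atTop (nhds 0) := by
  exact statement_4' lam hlam K Γ hK hL kHat hcard

end PlantedStructures
end

section
/- Let (I_1,…,I_K) be an ordered K-path chosen uniformly at random among all n(n−1)⋯(n−K+1) ordered sequences of K distinct vertices of [n], and for 1 ≤ t ≤ K−1 define Z_t = 1 if the edge (I_t, I_{t+1}) is an edge of the fixed path (1−2−⋯−K), Z_t = 0 if it is not but I_{t+1} ∈ [K], and Z_t = −1 if I_{t+1} ∉ [K]. Let n′ = n−K, and let (Z′_t)_{t≥1} be the Markov chain on state space {−1, 0, 1} with initial distribution ℙ(Z′_1 = 1) = (K/n′)(2/n′), ℙ(Z′_1 ≥ 0) = K/n′, and transition probabilities: from state −1, to (−1, 0, 1) with probabilities (1−K/n′, K/n′, 0); from state 0, with probabilities (1−K/n′, (K−2)/n′,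 2/n′); from state 1, with probabilities (1−K/n′, (K−1)/n′, 1/n′). Then for every x ≥ 1 and every m ≥ 1: E[x^{Σ_{t=1}^m Z_t⁺}] ≤ E[x^{Σ_{t=1}^m Z′_t⁺}], where z⁺ = max(z, 0). -/
open scoped Classical BigOperators
open Filter

namespace PlantedStructures

noncomputable def Vb (n K : ℕ) (x : ℝ) : ℕ → Fin 3 → ℝ
  | 0 => fun _ => 1
  | (j+1) => fun s => ∑ s' : Fin 3, chainTrans n K s s' * (x ^ statePlus s' * Vb n K x j s')

lemma ct00 (n K : ℕ) : chainTrans n K 0 0 = 1 - K / ((n : ℝ) - K) := rfl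
lemma ct01 (n K : ℕ) : chainTrans n K 0 1 = K / ((n : ℝ) - K) := rfl
lemma ct02 (n K : ℕ) : chainTrans n K 0 2 = 0 := rfl
lemma ct10 (n K : ℕ) : chainTrans n K 1 0 = 1 - K / ((n : ℝ) - K) := rfl
lemma ct11 (n K : ℕ) : chainTrans n K 1 1 = ((K : ℝ) - 2) / ((n : ℝ) - K) := rfl
lemma ct12 (n K : ℕ) : chainTrans n K 1 2 = 2 / ((n : ℝ) - K) := rfl
lemma ct20 (n K : ℕ) : chainTrans n K 2 0 = 1 - K / ((n : ℝ) - K) := rfl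
lemma ct21 (n K : ℕ) : chainTrans n K 2 1 = ((K : ℝ) - 1) / ((n : ℝ) - K) := rfl
lemma ct22 (n K : ℕ) : chainTrans n K 2 2 = 1 / ((n : ℝ) - K) := rfl
lemma ci0 (n K : ℕ) : chainInit n K 0 = 1 - K / ((n : ℝ) - K) := rfl
lemma ci1 (n K : ℕ) : chainInit n K 1 = K / ((n : ℝ) - K) - 2 * K / ((n : ℝ) - K) ^ 2 := rfl
lemma ci2 (n K : ℕ) : chainInit n K 2 = 2 * K / ((n : ℝ) - K) ^ 2 := rfl

lemma Vb_succ (n K : ℕ) (x : ℝ) (j : ℕ) (s : Fin 3) :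
    Vb n K x (j+1) s = chainTrans n K s 0 * Vb n K x j 0
      + chainTrans n K s 1 * Vb n K x j 1 + chainTrans n K s 2 * (x * Vb n K x j 2) := by
  show (∑ s' : Fin 3, _) = _
  rw [Fin.sum_univ_three]
  simp [statePlus]

section
variable (n K : ℕ) (x : ℝ)

/-- `P j` -/
noncomputable def Pb (j : ℕ) : ℝ := Vb n K x j 1 - Vb n K x j 0
/-- `D j` -/
noncomputable def Db (j : ℕ) : ℝ := x * Vb n K x j 2 - Vb n K x j 1

variable (hc : (0:ℝ) < (n:ℝ) - K)

include hc in
lemma cVb0 (j : ℕ) :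
    ((n:ℝ)-K) * Vb n K x (j+1) 0 = ((n:ℝ)-K) * Vb n K x j 0 + K * Pb n K x j := by
  rw [Vb_succ, Pb]
  simp only [ct00, ct01, ct02, ct10, ct11, ct12, ct20, ct21, ct22]
  field_simp
  ring

include hc in
lemma cVb1 (j : ℕ) :
    ((n:ℝ)-K) * Vb n K x (j+1) 1
      = ((n:ℝ)-K) * Vb n K x j 0 + K * Pb n K x j + 2 * Db n K x j := by
  rw [Vb_succ, Pb, Db]
  simp only [ct00, ct01, ct02, ct10, ct11, ct12, ct20, ct21, ct22]
  field_simp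
  ring

include hc in
lemma cVb2 (j : ℕ) :
    ((n:ℝ)-K) * Vb n K x (j+1) 2
      = ((n:ℝ)-K) * Vb n K x j 0 + K * Pb n K x j + Db n K x j := by
  rw [Vb_succ, Pb, Db]
  simp only [ct00, ct01, ct02, ct10, ct11, ct12, ct20, ct21, ct22]
  field_simp
  ring

include hc in
lemma cPb (j : ℕ) : ((n:ℝ)-K) * Pb n K x (j+1) = 2 * Db n K x j := by
  have h0 := cVb0 n K x hc j
  have h1 := cVb1 n K x hc j
  rw [Pb]; linear_combination h1 - h0

include hc in
lemma cDb (j : ℕ) : ((n:ℝ)-K) * Db n K x (j+1)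
    = (x - 1) * (((n:ℝ)-K) * Vb n K x (j+1) 0) + (x - 2) * Db n K x j := by
  have h0 := cVb0 n K x hc j
  have h1 := cVb1 n K x hc j
  have h2 := cVb2 n K x hc j
  rw [Db]; linear_combination x * h2 - h1 + (1 - x) * h0

/-- main chain invariants -/
lemma Vb_invariants (hc1 : (1:ℝ) ≤ (n:ℝ) - K) (hx : 1 ≤ x) (j : ℕ) :
    0 ≤ Vb n K x j 0 ∧ 0 ≤ Pb n K x j ∧ 0 ≤ Db n K x j ∧
      (x ≤ 2 → Db n K x j ≤ (x - 1) * Vb n K x j 0) := by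
  have hc : (0:ℝ) < (n:ℝ) - K := lt_of_lt_of_le one_pos hc1
  induction j with
  | zero =>
      refine ⟨by norm_num [Vb], by norm_num [Pb, Vb], by simp [Db, Vb]; linarith, ?_⟩
      intro _; simp [Db, Pb, Vb]
  | succ j ih =>
      obtain ⟨h0, hP, hD, hDle⟩ := ih
      have e0 := cVb0 n K x hc j
      have eP := cPb n K x hc j
      have eD := cDb n K x hc j
      have hKr : (0:ℝ) ≤ (K:ℕ) := Nat.cast_nonneg K
      have h0' : 0 ≤ Vb n K x (j+1) 0 := by nlinarith
      have hP' : 0 ≤ Pb n K x (j+1) := by nlinarith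
      have hD' : 0 ≤ Db n K x (j+1) := by
        rcases le_or_gt x 2 with h2 | h2
        · have := hDle h2
          -- c*D' = (x-1)*(c*V'0) + (x-2)*D, with D ≤ (x-1)V0, c ≥ 1, cV'0 ≥ cV0
          nlinarith [mul_nonneg (mul_nonneg (sub_nonneg.mpr hx) (sub_nonneg.mpr hc1)) h0,
            mul_nonneg (mul_nonneg (sub_nonneg.mpr hx) hKr) hP,
            mul_nonneg (sub_nonneg.mpr h2) (sub_nonneg.mpr this),
            mul_nonneg (mul_nonneg (sub_nonneg.mpr hx) (sub_nonneg.mpr hx)) h0]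
        · nlinarith [mul_nonneg (sub_nonneg.mpr hx) h0']
      refine ⟨h0', hP', hD', ?_⟩
      intro h2
      nlinarith [mul_nonneg (sub_nonneg.mpr h2) hD]

end

lemma sp0 : statePlus 0 = 0 := rfl
lemma sp1 : statePlus 1 = 0 := rfl
lemma sp2 : statePlus 2 = 1 := rfl

lemma chainF_swap (n K : ℕ) (x : ℝ) (t j : ℕ) :
    ∑ s : Fin 3, chainF n K x (t+1) s * Vb n K x j s
      = ∑ s : Fin 3, chainF n K x t s * Vb n K x (j+1) s := by
  have h : ∀ s : Fin 3, chainF n K x (t + 1) s * Vb n K x j s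
      = ∑ s' : Fin 3, chainF n K x t s' * (chainTrans n K s' s * (x ^ statePlus s * Vb n K x j s)) := by
    intro s
    show (∑ s' : Fin 3, chainF n K x t s' * chainTrans n K s' s) * x ^ statePlus s * Vb n K x j s = _
    rw [Finset.sum_mul, Finset.sum_mul]
    exact Finset.sum_congr rfl (fun s' _ => by ring)
  rw [Finset.sum_congr rfl (fun s _ => h s), Finset.sum_comm]
  refine Finset.sum_congr rfl (fun s' _ => ?_)
  have h2 : Vb n K x (j+1) s' = ∑ s : Fin 3, chainTrans n K s' s * (x ^ statePlus s * Vb n K x j s) := rfl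
  rw [h2, Finset.mul_sum]

lemma chainExp_eq_Vb (n K : ℕ) (x : ℝ) (m : ℕ) :
    chainExp n K x m = ∑ s : Fin 3, chainF n K x 0 s * Vb n K x (m-1) s := by
  have key : ∀ b a, (∑ s : Fin 3, chainF n K x (a + b) s * Vb n K x 0 s)
      = ∑ s : Fin 3, chainF n K x a s * Vb n K x b s := by
    intro b
    induction b with
    | zero => intro a; rfl
    | succ b ih =>
        intro a
        rw [show a + (b+1) = (a+1) + b from by omega, ih (a+1), chainF_swap]
  have h := key (m-1) 0
  simp only [zero_add] at h
  rw [chainExp, show (∑ s : Fin 3, chainF n K x (m-1) s)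
    = ∑ s : Fin 3, chainF n K x (m-1) s * Vb n K x 0 s from by simp [Vb], h]

lemma chainF0_Vb (n K : ℕ) (x : ℝ) (hc : (0:ℝ) < (n:ℝ) - K) (j : ℕ) :
    ((n:ℝ)-K)^2 * (∑ s : Fin 3, chainF n K x 0 s * Vb n K x j s)
      = ((n:ℝ)-K)^2 * Vb n K x j 0 + ((n:ℝ)-K) * K * Pb n K x j + 2 * K * Db n K x j := by
  rw [Fin.sum_univ_three]
  have e0 : chainF n K x 0 0 = chainInit n K 0 * x ^ statePlus 0 := rfl
  have e1 : chainF n K x 0 1 = chainInit n K 1 * x ^ statePlus 1 := rfl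
  have e2 : chainF n K x 0 2 = chainInit n K 2 * x ^ statePlus 2 := rfl
  rw [e0, e1, e2]
  simp only [ci0, ci1, ci2, sp0, sp1, sp2, pow_zero, pow_one, Pb, Db]
  field_simp
  ring


/-- state of the last edge -/
noncomputable def stf (K : ℕ) {n : ℕ} (u v : Fin n) : Fin 3 :=
  if inPathEdge K u v then 2 else if v.val < K then 1 else 0

/-- number of path-edge hits of a tuple -/
noncomputable def hitsF (K : ℕ) {n r : ℕ} (g : Fin (r+1) → Fin n) : ℕ :=
  ∑ i : Fin r, if inPathEdge K (g i.castSucc) (g i.succ) then 1 else 0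

lemma sum_snoc {n r : ℕ} (B : (Fin (r+1) → Fin n) → ℝ) :
    ∑ g : Fin (r+1) → Fin n, B g = ∑ g : Fin r → Fin n, ∑ v : Fin n, B (Fin.snoc g v) := by
  have hbij : Function.Bijective
      (fun p : (Fin r → Fin n) × Fin n => (Fin.snoc p.1 p.2 : Fin (r+1) → Fin n)) := by
    refine Function.bijective_iff_has_inverse.mpr
      ⟨fun g => (Fin.init g, g (Fin.last r)), fun p => ?_, fun g => ?_⟩
    · ext <;> simp [Fin.init_snoc, Fin.snoc_last]
    · simp [Fin.snoc_init_self]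
  calc ∑ g : Fin (r + 1) → Fin n, B g
      = ∑ p : (Fin r → Fin n) × Fin n, B (Fin.snoc p.1 p.2) :=
        (Fintype.sum_bijective _ hbij _ B (fun p => rfl)).symm
    _ = ∑ g : Fin r → Fin n, ∑ v : Fin n, B (Fin.snoc g v) := by
        exact Fintype.sum_prod_type (f := fun p : (Fin r → Fin n) × Fin n => B (Fin.snoc p.1 p.2))

lemma inj_snoc {n r : ℕ} (g : Fin r → Fin n) (v : Fin n) :
    Function.Injective (Fin.snoc g v : Fin (r+1) → Fin n)
      ↔ Function.Injective g ∧ v ∉ Set.range g := by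
  constructor
  · intro h
    refine ⟨fun i j hij => ?_, ?_⟩
    · have h2 : (Fin.snoc g v : Fin (r+1) → Fin n) i.castSucc
          = (Fin.snoc g v : Fin (r+1) → Fin n) j.castSucc := by
        rwa [Fin.snoc_castSucc, Fin.snoc_castSucc]
      exact Fin.castSucc_injective r (h h2)
    · rintro ⟨i, hi⟩
      refine Fin.ne_of_lt (Fin.castSucc_lt_last i) (h ?_)
      rw [Fin.snoc_castSucc, Fin.snoc_last, hi]
  · rintro ⟨hg, hv⟩ i j hij
    rcases Fin.eq_castSucc_or_eq_last i with ⟨i', rfl⟩ | rfl <;>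
      rcases Fin.eq_castSucc_or_eq_last j with ⟨j', rfl⟩ | rfl
    · rw [Fin.snoc_castSucc, Fin.snoc_castSucc] at hij
      rw [hg hij]
    · rw [Fin.snoc_castSucc, Fin.snoc_last] at hij
      exact absurd ⟨i', hij⟩ hv
    · rw [Fin.snoc_last, Fin.snoc_castSucc] at hij
      exact absurd ⟨j', hij.symm⟩ hv
    · rfl

lemma hitsF_snoc (K : ℕ) {n r : ℕ} (g : Fin (r+1) → Fin n) (v : Fin n) :
    hitsF K (Fin.snoc g v : Fin (r+2) → Fin n)
      = hitsF K g + (if inPathEdge K (g (Fin.last r)) v then 1 else 0) := by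
  show (∑ i : Fin (r+1), _) = _
  rw [Fin.sum_univ_castSucc]
  congr 1
  · refine Finset.sum_congr rfl (fun i _ => ?_)
    rw [Fin.succ_castSucc, Fin.snoc_castSucc, Fin.snoc_castSucc]
  · rw [Fin.succ_last, Fin.snoc_castSucc, Fin.snoc_last]


lemma inPathEdge_symm {K n : ℕ} {u v : Fin n} (h : inPathEdge K u v) : inPathEdge K v u :=
  ⟨h.2.1, h.1, h.2.2.symm⟩

lemma card_edge_le_two (K : ℕ) {n : ℕ} (w : Fin n) :
    (Finset.univ.filter (fun v => inPathEdge K w v)).card ≤ 2 := by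
  have h : (Finset.univ.filter (fun v => inPathEdge K w v)).card
      ≤ (Finset.univ : Finset Bool).card := by
    apply Finset.card_le_card_of_injOn (fun v => decide (w.val + 1 = v.val))
    · intro v _; exact Finset.mem_univ _
    · intro v1 h1 v2 h2 hb
      simp only [Finset.mem_coe, Finset.mem_filter, Finset.mem_univ, true_and] at h1 h2
      rw [decide_eq_decide] at hb
      obtain ⟨_, _, hor1⟩ := h1
      obtain ⟨_, _, hor2⟩ := h2
      rcases hor1 with h | h
      · have h2' : w.val + 1 = v2.val := hb.mp h
        exact Fin.ext (by omega)
      · rcases hor2 with h' | h'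
        · have h1' : w.val + 1 = v1.val := hb.mpr h'
          exact Fin.ext (by omega)
        · exact Fin.ext (by omega)
  simpa using h

lemma card_ltK_le {n : ℕ} (K : ℕ) :
    (Finset.univ.filter (fun v : Fin n => v.val < K)).card ≤ K := by
  calc (Finset.univ.filter (fun v : Fin n => v.val < K)).card
      ≤ (Finset.range K).card := by
        apply Finset.card_le_card_of_injOn (fun v => v.val)
        · intro v hv
          simp only [Finset.mem_coe, Finset.mem_filter, Finset.mem_univ, true_and] at hv
          exact Finset.mem_range.mpr hv
        · intro a _ b _ h
          exact Fin.ext h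
    _ = K := Finset.card_range K

lemma card_compl_range {n r : ℕ} (g : Fin r → Fin n) (hg : Function.Injective g) :
    (Finset.univ.filter (fun v => v ∉ Set.range g)).card = n - r := by
  have h : Finset.univ.filter (fun v : Fin n => v ∉ Set.range g)
      = (Finset.univ.image g)ᶜ := by
    ext v
    simp [Set.range, eq_comm]
  rw [h, Finset.card_compl, Finset.card_image_of_injective _ hg]
  simp

lemma term_eq (n K : ℕ) (x : ℝ) (j : ℕ) (u v : Fin n) :
    x ^ (if inPathEdge K u v then 1 else 0) * Vb n K x j (stf K u v)
      = Vb n K x j 0 + Pb n K x j * (if v.val < K then 1 else 0)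
        + Db n K x j * (if inPathEdge K u v then 1 else 0) := by
  by_cases he : inPathEdge K u v
  · have hvK : v.val < K := he.2.1
    simp only [stf, he, hvK, if_true, if_pos, pow_one, mul_one, Pb, Db]
    ring
  · by_cases hvK : v.val < K
    · simp only [stf, he, hvK, if_false, if_true, pow_zero, one_mul, mul_one, mul_zero, Pb]
      ring
    · simp only [stf, he, hvK, if_false, pow_zero, one_mul, mul_zero]
      ring

lemma core (n K : ℕ) (x : ℝ) (hK : 2 ≤ K) (hKn : K < n) (hx : 1 ≤ x)
    {r : ℕ} (hr : r + 2 ≤ K) (g : Fin (r+2) → Fin n) (hg : Function.Injective g) (j : ℕ) :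
    ∑ v : Fin n, (if v ∉ Set.range g then
        x ^ (if inPathEdge K (g (Fin.last (r+1))) v then 1 else 0)
          * Vb n K x j (stf K (g (Fin.last (r+1))) v) else 0)
      ≤ ((n:ℝ) - (r+2))
          * Vb n K x (j+1)
              (stf K (g (Fin.castSucc (Fin.last r))) (g (Fin.last (r+1)))) := by
  have hKn' : (K:ℝ) < (n:ℝ) := by exact_mod_cast hKn
  have hc : (0:ℝ) < (n:ℝ) - K := by linarith
  have hc1 : (1:ℝ) ≤ (n:ℝ) - K := by
    have : (K:ℝ) + 1 ≤ (n:ℝ) := by exact_mod_cast hKn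
    linarith
  obtain ⟨h0, hP, hD, _⟩ := Vb_invariants n K x hc1 hx j
  set w := g (Fin.last (r+1)) with hw
  set u := g (Fin.castSucc (Fin.last r)) with hu
  set c : ℝ := (n:ℝ) - K with hcdef
  set S : Finset (Fin n) := Finset.univ.filter (fun v => v ∉ Set.range g) with hS
  set A : ℝ := (n:ℝ) - (r+2) with hA
  have hcA : c ≤ A := by
    rw [hcdef, hA]
    have : (r:ℝ) + 2 ≤ (K:ℝ) := by exact_mod_cast hr
    linarith
  have hA0 : 0 ≤ A := le_trans (le_of_lt hc) hcA
  -- rewrite LHS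
  have hsum : (∑ v : Fin n, (if v ∉ Set.range g then
        x ^ (if inPathEdge K w v then 1 else 0) * Vb n K x j (stf K w v) else 0))
      = ∑ v ∈ S, x ^ (if inPathEdge K w v then 1 else 0) * Vb n K x j (stf K w v) := by
    rw [Finset.sum_filter]
  have hLHS : (∑ v : Fin n, (if v ∉ Set.range g then
        x ^ (if inPathEdge K w v then 1 else 0) * Vb n K x j (stf K w v) else 0))
      = (S.card : ℝ) * Vb n K x j 0
        + Pb n K x j * ((S.filter (fun v => v.val < K)).card : ℝ)
        + Db n K x j * ((S.filter (fun v => inPathEdge K w v)).card : ℝ) := by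
    rw [hsum, Finset.sum_congr rfl (fun v _ => term_eq n K x j w v)]
    rw [Finset.sum_add_distrib, Finset.sum_add_distrib, Finset.sum_const,
      ← Finset.mul_sum, ← Finset.mul_sum, Finset.sum_boole, Finset.sum_boole]
    simp [nsmul_eq_mul]
  have hScard : (S.card : ℝ) = A := by
    rw [hS, card_compl_range g hg, hA]
    have h2n : r + 2 ≤ n := le_trans hr (le_of_lt hKn)
    push_cast [Nat.cast_sub h2n]
    ring
  have hKd : ((S.filter (fun v => v.val < K)).card : ℝ) ≤ (K:ℝ) := by
    have hsub : S.filter (fun v => v.val < K) ⊆ Finset.univ.filter (fun v : Fin n => v.val < K) :=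
      Finset.filter_subset_filter _ (Finset.filter_subset _ _)
    have h := le_trans (Finset.card_le_card hsub) (card_ltK_le (n := n) K)
    exact_mod_cast h
  have hKd0 : (0:ℝ) ≤ ((S.filter (fun v => v.val < K)).card : ℝ) := Nat.cast_nonneg _
  have hE2 : ((S.filter (fun v => inPathEdge K w v)).card : ℝ) ≤ 2 := by
    have hsub : S.filter (fun v => inPathEdge K w v)
        ⊆ Finset.univ.filter (fun v : Fin n => inPathEdge K w v) :=
      Finset.filter_subset_filter _ (Finset.filter_subset _ _)
    have h := le_trans (Finset.card_le_card hsub) (card_edge_le_two K w)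
    exact_mod_cast h
  have hE0 : (0:ℝ) ≤ ((S.filter (fun v => inPathEdge K w v)).card : ℝ) := Nat.cast_nonneg _
  rw [hLHS, hScard]
  rw [← mul_le_mul_iff_right₀ hc]
  set cK := ((S.filter (fun v => v.val < K)).card : ℝ) with hcK
  set cE := ((S.filter (fun v => inPathEdge K w v)).card : ℝ) with hcE
  have tP : c * (Pb n K x j * cK) ≤ A * ((K:ℝ) * Pb n K x j) := by
    have h : c * cK ≤ A * K := mul_le_mul hcA hKd hKd0 hA0
    nlinarith
  by_cases he : inPathEdge K u w
  · -- state 2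
    have hst : stf K u w = 2 := by simp [stf, he]
    rw [hst]
    have hid := cVb2 n K x hc j
    have hE1 : cE ≤ 1 := by
      have hsub : S.filter (fun v => inPathEdge K w v)
          ⊆ (Finset.univ.filter (fun v => inPathEdge K w v)).erase u := by
        intro v hv
        simp only [hS, Finset.mem_filter, Finset.mem_univ, true_and] at hv
        refine Finset.mem_erase.mpr ⟨?_, by simp [hv.2]⟩
        rintro rfl
        exact hv.1 ⟨_, hu.symm⟩
      have hmem : u ∈ Finset.univ.filter (fun v => inPathEdge K w v) := by
        simp [inPathEdge_symm he]
      have h2 := le_trans (Finset.card_le_card hsub)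
        (le_trans (le_of_eq (Finset.card_erase_of_mem hmem))
          (Nat.sub_le_sub_right (card_edge_le_two K w) 1))
      have h3 : (S.filter (fun v => inPathEdge K w v)).card ≤ 1 := by omega
      rw [hcE]
      exact_mod_cast h3
    have tE : c * (Db n K x j * cE) ≤ A * Db n K x j := by
      have h : c * cE ≤ A * 1 := mul_le_mul hcA hE1 hE0 hA0
      nlinarith
    calc c * (A * Vb n K x j 0 + Pb n K x j * cK + Db n K x j * cE)
        = A * (c * Vb n K x j 0) + c * (Pb n K x j * cK) + c * (Db n K x j * cE) := by ring
      _ ≤ A * (c * Vb n K x j 0) + A * ((K:ℝ) * Pb n K x j) + A * Db n K x j := by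
          linarith [tP, tE]
      _ = A * (c * Vb n K x j 0 + (K:ℝ) * Pb n K x j + Db n K x j) := by ring
      _ = A * (c * Vb n K x (j+1) 2) := by rw [← hid]
      _ = c * (A * Vb n K x (j+1) 2) := by ring
  · by_cases hwK : w.val < K
    · -- state 1
      have hst : stf K u w = 1 := by simp [stf, he, hwK]
      rw [hst]
      have hid := cVb1 n K x hc j
      have tE : c * (Db n K x j * cE) ≤ A * (2 * Db n K x j) := by
        have h : c * cE ≤ A * 2 := mul_le_mul hcA hE2 hE0 hA0
        nlinarith
      calc c * (A * Vb n K x j 0 + Pb n K x j * cK + Db n K x j * cE)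
          = A * (c * Vb n K x j 0) + c * (Pb n K x j * cK) + c * (Db n K x j * cE) := by ring
        _ ≤ A * (c * Vb n K x j 0) + A * ((K:ℝ) * Pb n K x j) + A * (2 * Db n K x j) := by
            linarith [tP, tE]
        _ = A * (c * Vb n K x j 0 + (K:ℝ) * Pb n K x j + 2 * Db n K x j) := by ring
        _ = A * (c * Vb n K x (j+1) 1) := by rw [← hid]
        _ = c * (A * Vb n K x (j+1) 1) := by ring
    · -- state 0
      have hst : stf K u w = 0 := by simp [stf, he, hwK]
      rw [hst]
      have hid := cVb0 n K x hc j
      have hEzero : cE = 0 := by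
        have h : S.filter (fun v => inPathEdge K w v) = ∅ := by
          apply Finset.filter_eq_empty_iff.mpr
          intro v _
          exact fun hedge => hwK hedge.1
        rw [hcE, h]
        simp
      rw [hEzero]
      calc c * (A * Vb n K x j 0 + Pb n K x j * cK + Db n K x j * 0)
          = A * (c * Vb n K x j 0) + c * (Pb n K x j * cK) := by ring
        _ ≤ A * (c * Vb n K x j 0) + A * ((K:ℝ) * Pb n K x j) := by linarith [tP]
        _ = A * (c * Vb n K x j 0 + (K:ℝ) * Pb n K x j) := by ring
        _ = A * (c * Vb n K x (j+1) 0) := by rw [← hid]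
        _ = c * (A * Vb n K x (j+1) 0) := by ring


/-- weighted state-sum after `t+1` edges -/
noncomputable def PhiF (n K : ℕ) (x : ℝ) (m t : ℕ) : ℝ :=
  ∑ g : Fin (t+2) → Fin n, (if Function.Injective g then
      x ^ (hitsF K g) * Vb n K x (m-1-t)
        (stf K (g (Fin.castSucc (Fin.last t))) (g (Fin.last (t+1)))) else 0)

lemma Phi_step (n K : ℕ) (x : ℝ) (hK : 2 ≤ K) (hKn : K < n) (hx : 1 ≤ x) (m t : ℕ)
    (ht : t + 2 ≤ K) (htm : t + 2 ≤ m) :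
    PhiF n K x m (t+1) ≤ ((n:ℝ) - (t+2)) * PhiF n K x m t := by
  have hx0 : (0:ℝ) ≤ x := le_trans zero_le_one hx
  have hj : m - 1 - (t+1) + 1 = m - 1 - t := by omega
  rw [PhiF, PhiF, sum_snoc, Finset.mul_sum]
  apply Finset.sum_le_sum
  intro g' _
  by_cases hinj : Function.Injective g'
  · have hterm : ∀ v : Fin n,
        (if Function.Injective (Fin.snoc g' v : Fin (t+1+2) → Fin n) then
          x ^ (hitsF K (Fin.snoc g' v : Fin (t+1+2) → Fin n)) * Vb n K x (m-1-(t+1))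
            (stf K ((Fin.snoc g' v : Fin (t+1+2) → Fin n) (Fin.castSucc (Fin.last (t+1))))
              ((Fin.snoc g' v : Fin (t+1+2) → Fin n) (Fin.last (t+1+1)))) else 0)
        = x ^ (hitsF K g') * (if v ∉ Set.range g' then
            x ^ (if inPathEdge K (g' (Fin.last (t+1))) v then 1 else 0)
              * Vb n K x (m-1-(t+1)) (stf K (g' (Fin.last (t+1))) v) else 0) := by
      intro v
      rw [Fin.snoc_castSucc, Fin.snoc_last, hitsF_snoc, pow_add]
      by_cases hv : v ∉ Set.range g'
      · rw [if_pos ((inj_snoc g' v).mpr ⟨hinj, hv⟩), if_pos hv]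
        ring
      · rw [if_neg (fun hcontra => hv ((inj_snoc g' v).mp hcontra).2), if_neg hv]
        simp
    rw [Finset.sum_congr rfl (fun v _ => hterm v), ← Finset.mul_sum]
    rw [if_pos hinj]
    have hcore := core n K x hK hKn hx (r := t) ht g' hinj (m-1-(t+1))
    rw [hj] at hcore
    calc x ^ (hitsF K g') * ∑ v : Fin n, (if v ∉ Set.range g' then
            x ^ (if inPathEdge K (g' (Fin.last (t+1))) v then 1 else 0)
              * Vb n K x (m-1-(t+1)) (stf K (g' (Fin.last (t+1))) v) else 0)
        ≤ x ^ (hitsF K g') * (((n:ℝ) - (t+2))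
            * Vb n K x (m-1-t)
                (stf K (g' (Fin.castSucc (Fin.last t))) (g' (Fin.last (t+1))))) :=
          mul_le_mul_of_nonneg_left hcore (pow_nonneg hx0 _)
      _ = ((n:ℝ) - (t+2)) * (x ^ (hitsF K g') * Vb n K x (m-1-t)
              (stf K (g' (Fin.castSucc (Fin.last t))) (g' (Fin.last (t+1))))) := by ring
  · have hzero : ∀ v : Fin n,
        (if Function.Injective (Fin.snoc g' v : Fin (t+1+2) → Fin n) then
          x ^ (hitsF K (Fin.snoc g' v : Fin (t+1+2) → Fin n)) * Vb n K x (m-1-(t+1))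
            (stf K ((Fin.snoc g' v : Fin (t+1+2) → Fin n) (Fin.castSucc (Fin.last (t+1))))
              ((Fin.snoc g' v : Fin (t+1+2) → Fin n) (Fin.last (t+1+1)))) else 0) = 0 := by
      intro v
      rw [if_neg (fun hcontra => hinj ((inj_snoc g' v).mp hcontra).1)]
    rw [Finset.sum_congr rfl (fun v _ => hzero v), if_neg hinj]
    simp


lemma inner_u_le (n K : ℕ) (x : ℝ) (hK : 2 ≤ K) (hKn : K < n) (hx : 1 ≤ x) (j : ℕ)
    (u : Fin n) :
    ∑ v : Fin n, (if v ≠ u then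
        x ^ (if inPathEdge K u v then 1 else 0) * Vb n K x j (stf K u v) else 0)
      ≤ ((n:ℝ) - 1) * Vb n K x j 0 + (K:ℝ) * Pb n K x j
          + (if u.val < K then 2 else 0) * Db n K x j := by
  have hc1 : (1:ℝ) ≤ (n:ℝ) - K := by
    have : (K:ℝ) + 1 ≤ (n:ℝ) := by exact_mod_cast hKn
    linarith
  obtain ⟨h0, hP, hD, _⟩ := Vb_invariants n K x hc1 hx j
  set S : Finset (Fin n) := Finset.univ.filter (fun v => v ≠ u) with hS
  have hsum : (∑ v : Fin n, (if v ≠ u then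
        x ^ (if inPathEdge K u v then 1 else 0) * Vb n K x j (stf K u v) else 0))
      = ∑ v ∈ S, x ^ (if inPathEdge K u v then 1 else 0) * Vb n K x j (stf K u v) := by
    rw [Finset.sum_filter]
  have hLHS : (∑ v : Fin n, (if v ≠ u then
        x ^ (if inPathEdge K u v then 1 else 0) * Vb n K x j (stf K u v) else 0))
      = (S.card : ℝ) * Vb n K x j 0
        + Pb n K x j * ((S.filter (fun v => v.val < K)).card : ℝ)
        + Db n K x j * ((S.filter (fun v => inPathEdge K u v)).card : ℝ) := by
    rw [hsum, Finset.sum_congr rfl (fun v _ => term_eq n K x j u v)]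
    rw [Finset.sum_add_distrib, Finset.sum_add_distrib, Finset.sum_const,
      ← Finset.mul_sum, ← Finset.mul_sum, Finset.sum_boole, Finset.sum_boole]
    simp [nsmul_eq_mul]
  have hn1 : 1 ≤ n := lt_of_le_of_lt (by omega : 0 ≤ K) hKn
  have hScard : (S.card : ℝ) ≤ (n:ℝ) - 1 := by
    have h1 : S.card = n - 1 := by
      rw [hS, Finset.filter_ne', Finset.card_erase_of_mem (Finset.mem_univ u)]
      simp
    rw [h1, Nat.cast_sub hn1]
    simp
  have hKd : ((S.filter (fun v => v.val < K)).card : ℝ) ≤ (K:ℝ) := by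
    have hsub : S.filter (fun v => v.val < K)
        ⊆ Finset.univ.filter (fun v : Fin n => v.val < K) :=
      Finset.filter_subset_filter _ (Finset.filter_subset _ _)
    have h := le_trans (Finset.card_le_card hsub) (card_ltK_le (n := n) K)
    exact_mod_cast h
  have hEd : ((S.filter (fun v => inPathEdge K u v)).card : ℝ)
      ≤ (if u.val < K then 2 else 0) := by
    by_cases huK : u.val < K
    · rw [if_pos huK]
      have hsub : S.filter (fun v => inPathEdge K u v)
          ⊆ Finset.univ.filter (fun v : Fin n => inPathEdge K u v) :=
        Finset.filter_subset_filter _ (Finset.filter_subset _ _)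
      have h := le_trans (Finset.card_le_card hsub) (card_edge_le_two K u)
      exact_mod_cast h
    · rw [if_neg huK]
      have h : S.filter (fun v => inPathEdge K u v) = ∅ :=
        Finset.filter_eq_empty_iff.mpr (fun v _ hedge => huK hedge.1)
      simp [h]
  rw [hLHS]
  have t1 : (S.card : ℝ) * Vb n K x j 0 ≤ ((n:ℝ) - 1) * Vb n K x j 0 :=
    mul_le_mul_of_nonneg_right hScard h0
  have t2 : Pb n K x j * ((S.filter (fun v => v.val < K)).card : ℝ)
      ≤ (K:ℝ) * Pb n K x j := by
    have := mul_le_mul_of_nonneg_left hKd hP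
    linarith
  have t3 : Db n K x j * ((S.filter (fun v => inPathEdge K u v)).card : ℝ)
      ≤ (if u.val < K then 2 else 0) * Db n K x j := by
    have := mul_le_mul_of_nonneg_left hEd hD
    linarith
  linarith

set_option maxHeartbeats 1000000 in
lemma Phi0_le (n K : ℕ) (x : ℝ) (hK : 2 ≤ K) (hKn : K < n) (hx : 1 ≤ x) (m : ℕ) :
    PhiF n K x m 0
      ≤ (n:ℝ) * ((n:ℝ) - 1) * (∑ s : Fin 3, chainF n K x 0 s * Vb n K x (m-1) s) := by
  have hKn' : (K:ℝ) < (n:ℝ) := by exact_mod_cast hKn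
  have hc : (0:ℝ) < (n:ℝ) - K := by linarith
  have hc1 : (1:ℝ) ≤ (n:ℝ) - K := by
    have : (K:ℝ) + 1 ≤ (n:ℝ) := by exact_mod_cast hKn
    linarith
  have hK2 : (2:ℝ) ≤ (K:ℝ) := by exact_mod_cast hK
  obtain ⟨h0, hP, hD, _⟩ := Vb_invariants n K x hc1 hx (m-1)
  -- step 1 : rewrite PhiF m 0 as a double sum
  have hPhi : PhiF n K x m 0 = ∑ u : Fin n, ∑ v : Fin n, (if v ≠ u then
      x ^ (if inPathEdge K u v then 1 else 0) * Vb n K x (m-1) (stf K u v) else 0) := by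
    rw [PhiF, sum_snoc]
    have hbij : Function.Bijective (fun u : Fin n => (fun _ => u : Fin 1 → Fin n)) := by
      refine Function.bijective_iff_has_inverse.mpr ⟨fun g1 => g1 0, fun u => rfl, fun g1 => ?_⟩
      funext i
      rw [Subsingleton.elim i 0]
    refine (Fintype.sum_bijective _ hbij _ _ (fun u => ?_)).symm
    refine Finset.sum_congr rfl (fun v _ => ?_)
    rw [Fin.snoc_castSucc, Fin.snoc_last]
    have hinj1 : Function.Injective (fun _ : Fin 1 => u) := fun a b _ => Subsingleton.elim a b
    have hhits : hitsF K (Fin.snoc (fun _ : Fin 1 => u) v : Fin 2 → Fin n)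
        = (if inPathEdge K u v then 1 else 0) := by
      rw [hitsF_snoc]
      simp [hitsF]
    by_cases hv : v ≠ u
    · have hinjsnoc : Function.Injective (Fin.snoc (fun _ : Fin 1 => u) v : Fin 2 → Fin n) := by
        rw [inj_snoc]
        refine ⟨hinj1, ?_⟩
        rw [Set.range_const]
        simpa using hv
      rw [if_pos hv, if_pos hinjsnoc, hhits]
      rfl
    · have hninj : ¬ Function.Injective (Fin.snoc (fun _ : Fin 1 => u) v : Fin 2 → Fin n) := by
        rw [inj_snoc]
        rintro ⟨-, hmem⟩
        rw [Set.range_const] at hmem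
        simp only [ne_eq, not_not] at hv
        exact hmem (by simpa using hv)
      rw [if_neg hv, if_neg hninj]
  rw [hPhi]
  -- step 2 : apply the per-`u` bound and sum
  have hmono := Finset.sum_le_sum (fun u (_ : u ∈ Finset.univ) =>
    inner_u_le n K x hK hKn hx (m-1) u)
  refine le_trans hmono ?_
  rw [Finset.sum_add_distrib, Finset.sum_add_distrib, Finset.sum_const, Finset.sum_const]
  rw [← Finset.sum_mul]
  have htwo : (∑ i : Fin n, if (i:ℕ) < K then (2:ℝ) else 0)
      = ((Finset.univ.filter (fun u : Fin n => u.val < K)).card : ℝ) * 2 := by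
    rw [← Finset.sum_boole, Finset.sum_mul]
    refine Finset.sum_congr rfl (fun i _ => ?_)
    split <;> ring
  rw [htwo]
  have hcard : ((Finset.univ.filter (fun u : Fin n => u.val < K)).card : ℝ) ≤ (K:ℝ) := by
    exact_mod_cast card_ltK_le (n := n) K
  have hcardn : ((Finset.univ : Finset (Fin n)).card : ℝ) = (n:ℝ) := by simp
  -- now the goal is a purely algebraic inequality
  have hid := chainF0_Vb n K x hc (m-1)
  set c : ℝ := (n:ℝ) - K with hcdef
  set V0 := Vb n K x (m-1) 0
  set P := Pb n K x (m-1)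
  set D := Db n K x (m-1)
  set Sg := ∑ s : Fin 3, chainF n K x 0 s * Vb n K x (m-1) s with hSg
  have hcn1 : c ≤ (n:ℝ) - 1 := by rw [hcdef]; linarith
  have hc2 : (0:ℝ) < c^2 := by positivity
  have hstep : (Finset.univ : Finset (Fin n)).card • (((n:ℝ) - 1) * V0)
      + (Finset.univ : Finset (Fin n)).card • ((K:ℝ) * P)
      + ((Finset.univ.filter (fun u : Fin n => u.val < K)).card : ℝ) * 2 * D
      ≤ (n:ℝ) * ((n:ℝ)-1) * V0 + (n:ℝ) * (K:ℝ) * P + (K:ℝ) * (2 * D) := by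
    simp only [nsmul_eq_mul, hcardn]
    have := mul_le_mul_of_nonneg_right (mul_le_mul_of_nonneg_right hcard (by norm_num : (0:ℝ) ≤ 2)) hD
    linarith
  refine le_trans hstep ?_
  rw [← mul_le_mul_iff_right₀ hc2]
  have hrhs : c^2 * ((n:ℝ) * ((n:ℝ)-1) * Sg) = (n:ℝ) * ((n:ℝ)-1) * (c^2 * Sg) := by ring
  rw [hrhs, hid]
  have hnn : (0:ℝ) ≤ (n:ℝ) := Nat.cast_nonneg n
  have hK0 : (0:ℝ) ≤ (K:ℝ) := Nat.cast_nonneg K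
  have key1 : c^2 ≤ ((n:ℝ)-1) * c := by nlinarith
  have key2 : c^2 ≤ (n:ℝ) * ((n:ℝ)-1) := by nlinarith
  have e1 : c^2 * ((n:ℝ) * (K:ℝ) * P) ≤ ((n:ℝ)-1) * c * ((n:ℝ) * (K:ℝ) * P) :=
    mul_le_mul_of_nonneg_right key1 (by positivity)
  have e2 : c^2 * ((K:ℝ) * (2 * D)) ≤ (n:ℝ) * ((n:ℝ)-1) * ((K:ℝ) * (2 * D)) :=
    mul_le_mul_of_nonneg_right key2 (by positivity)
  nlinarith [e1, e2]


lemma sum_inj_restrict (n a : ℕ) (A : (Fin a → Fin n) → ℝ) :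
    ∀ (b : ℕ) (h : a ≤ b),
      (∑ g : Fin b → Fin n, if Function.Injective g then A (g ∘ Fin.castLE h) else 0)
        = ((∏ j ∈ Finset.Ico a b, (n - j) : ℕ) : ℝ)
            * ∑ g : Fin a → Fin n, (if Function.Injective g then A g else 0) := by
  refine Nat.le_induction ?_ ?_
  · rw [Finset.Ico_self, Finset.prod_empty, Nat.cast_one, one_mul]
    refine Finset.sum_congr rfl (fun g _ => ?_)
    have hid : g ∘ Fin.castLE (le_refl a) = g := by
      funext i
      exact congrArg g (Fin.ext rfl)
    rw [hid]
  · intro b hb IH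
    have h1 : a ≤ b + 1 := le_trans hb (Nat.le_succ b)
    rw [sum_snoc]
    have hterm : ∀ (g' : Fin b → Fin n) (v : Fin n),
        (if Function.Injective (Fin.snoc g' v : Fin (b+1) → Fin n) then
          A ((Fin.snoc g' v : Fin (b+1) → Fin n) ∘ Fin.castLE h1) else 0)
        = (if Function.Injective g' then
            (if v ∉ Set.range g' then A (g' ∘ Fin.castLE hb) else 0) else 0) := by
      intro g' v
      have hcomp : (Fin.snoc g' v : Fin (b+1) → Fin n) ∘ Fin.castLE h1
          = g' ∘ Fin.castLE hb := by
        funext i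
        have h2 : Fin.castLE h1 i = Fin.castSucc (Fin.castLE hb i) := Fin.ext (by simp)
        rw [Function.comp_apply, h2, Fin.snoc_castSucc]
        rfl
      by_cases hinj : Function.Injective g'
      · by_cases hv : v ∉ Set.range g'
        · rw [if_pos ((inj_snoc g' v).mpr ⟨hinj, hv⟩), if_pos hinj, if_pos hv, hcomp]
        · rw [if_neg (fun hc => hv ((inj_snoc g' v).mp hc).2), if_pos hinj, if_neg hv]
      · rw [if_neg (fun hc => hinj ((inj_snoc g' v).mp hc).1), if_neg hinj]
    rw [Finset.sum_congr rfl (fun g' _ =>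
      Finset.sum_congr rfl (fun v _ => hterm g' v))]
    have hinner : ∀ g' : Fin b → Fin n,
        (∑ v : Fin n, (if Function.Injective g' then
            (if v ∉ Set.range g' then A (g' ∘ Fin.castLE hb) else 0) else 0))
        = ((n - b : ℕ) : ℝ) * (if Function.Injective g' then A (g' ∘ Fin.castLE hb) else 0) := by
      intro g'
      by_cases hinj : Function.Injective g'
      · simp only [if_pos hinj]
        rw [show (∑ v : Fin n, (if v ∉ Set.range g' then A (g' ∘ Fin.castLE hb) else 0))
            = ∑ v ∈ Finset.univ.filter (fun v => v ∉ Set.range g'), A (g' ∘ Fin.castLE hb) from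
          by rw [Finset.sum_filter]]
        rw [Finset.sum_const, card_compl_range g' hinj, nsmul_eq_mul]
      · simp only [if_neg hinj]
        simp
    rw [Finset.sum_congr rfl (fun g' _ => hinner g'), ← Finset.mul_sum, IH]
    rw [Finset.prod_Ico_succ_top hb]
    push_cast
    ring


lemma Phi_chain (n K : ℕ) (x : ℝ) (hK : 2 ≤ K) (hKn : K < n) (hx : 1 ≤ x) (M : ℕ)
    (hMK : M + 2 ≤ K) :
    ∀ t, t ≤ M → PhiF n K x (M+1) t
      ≤ ((∏ j ∈ Finset.Ico 2 (t+2), (n - j) : ℕ) : ℝ) * PhiF n K x (M+1) 0 := by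
  intro t
  induction t with
  | zero =>
      intro _
      rw [Finset.Ico_self, Finset.prod_empty, Nat.cast_one, one_mul]
  | succ t IH =>
      intro ht
      have ht' : t ≤ M := by omega
      have hstep := Phi_step n K x hK hKn hx (M+1) t (by omega) (by omega)
      have hfac : ((n:ℝ) - (t+2)) = ((n - (t+2) : ℕ) : ℝ) := by
        have h1 : t + 2 ≤ n := by omega
        push_cast [Nat.cast_sub h1]
        ring
      rw [hfac] at hstep
      refine le_trans hstep ?_
      have hIH := IH ht'
      have hnonneg : (0:ℝ) ≤ ((n - (t+2) : ℕ) : ℝ) := Nat.cast_nonneg _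
      calc ((n - (t+2) : ℕ) : ℝ) * PhiF n K x (M+1) t
          ≤ ((n - (t+2) : ℕ) : ℝ) * (((∏ j ∈ Finset.Ico 2 (t+2), (n - j) : ℕ) : ℝ)
              * PhiF n K x (M+1) 0) := mul_le_mul_of_nonneg_left hIH hnonneg
        _ = ((∏ j ∈ Finset.Ico 2 (t+1+2), (n - j) : ℕ) : ℝ) * PhiF n K x (M+1) 0 := by
            rw [show t+1+2 = (t+2)+1 from rfl, Finset.prod_Ico_succ_top (by omega : 2 ≤ t+2)]
            push_cast
            ring

theorem statement_9' (n K : ℕ) (hK : 2 ≤ K) (hKn : K < n) (x : ℝ) (hx : 1 ≤ x)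
    (m : ℕ) (hm : 1 ≤ m) (hmK : m ≤ K - 1) :
    (∑ f : Fin K ↪ Fin n, x ^ zPlusSum n K m f) / (Fintype.card (Fin K ↪ Fin n) : ℝ)
      ≤ chainExp n K x m := by
  obtain ⟨M, rfl⟩ : ∃ M, m = M + 1 := ⟨m - 1, by omega⟩
  have hMK : M + 2 ≤ K := by omega
  have hx0 : (0:ℝ) ≤ x := le_trans zero_le_one hx
  -- Step A: zPlusSum = hitsF of restriction
  have hzp : ∀ f : Fin K ↪ Fin n,
      zPlusSum n K (M+1) f = hitsF K ((f : Fin K → Fin n) ∘ Fin.castLE hMK) := by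
    intro f
    rw [zPlusSum, Finset.card_filter, ← Fin.sum_univ_eq_sum_range]
    refine Finset.sum_congr rfl (fun i _ => ?_)
    have hlt : (i:ℕ) + 1 < K := by omega
    refine if_congr ?_ rfl rfl
    constructor
    · rintro ⟨h, hP⟩
      exact hP
    · intro hP
      exact ⟨hlt, hP⟩
  -- Step B: embedding sum = injective-function sum
  have hEmb : (∑ f : Fin K ↪ Fin n, x ^ zPlusSum n K (M+1) f)
      = ∑ g : Fin K → Fin n, (if Function.Injective g then
          x ^ hitsF K (g ∘ Fin.castLE hMK) else 0) := by
    rw [Finset.sum_congr rfl (fun f _ => by rw [hzp f])]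
    rw [show (∑ g : Fin K → Fin n, (if Function.Injective g then
          x ^ hitsF K (g ∘ Fin.castLE hMK) else 0))
        = ∑ g ∈ Finset.univ.filter (fun g : Fin K → Fin n => Function.Injective g),
            x ^ hitsF K (g ∘ Fin.castLE hMK) from by rw [Finset.sum_filter]]
    apply Finset.sum_bij (i := fun (f : Fin K ↪ Fin n) _ => (f : Fin K → Fin n))
    · intro f _
      simp [f.injective]
    · intro f1 _ f2 _ hff
      exact DFunLike.coe_injective hff
    · intro g hg
      refine ⟨⟨g, (Finset.mem_filter.mp hg).2⟩, Finset.mem_univ _, rfl⟩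
    · intro f _
      rfl
  -- Step C: restriction
  have hC := sum_inj_restrict n (M+2) (fun g => x ^ hitsF K g) K hMK
  -- Step D: PhiF at t = M
  have hPhiM : (∑ g : Fin (M+2) → Fin n, (if Function.Injective g then
        x ^ hitsF K g else 0)) = PhiF n K x (M+1) M := by
    rw [PhiF]
    refine Finset.sum_congr rfl (fun g _ => ?_)
    by_cases hinj : Function.Injective g
    · rw [if_pos hinj, if_pos hinj, show M+1-1-M = 0 from by omega]
      show x ^ hitsF K g = x ^ hitsF K g * 1
      ring
    · rw [if_neg hinj, if_neg hinj]
  -- Step E, F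
  have hchain := Phi_chain n K x hK hKn hx M hMK M (le_refl M)
  have hPhi0 := Phi0_le n K x hK hKn hx (M+1)
  have hcexp : chainExp n K x (M+1)
      = ∑ s : Fin 3, chainF n K x 0 s * Vb n K x (M+1-1) s := chainExp_eq_Vb n K x (M+1)
  -- positivity of the card
  have hcardpos : 0 < Fintype.card (Fin K ↪ Fin n) := by
    rw [Fintype.card_embedding_eq, Fintype.card_fin, Fintype.card_fin]
    rw [Nat.descFactorial_eq_prod_range]
    apply Finset.prod_pos
    intro i hi
    have : i < K := Finset.mem_range.mp hi
    omega
  have hcardR : (0:ℝ) < (Fintype.card (Fin K ↪ Fin n) : ℝ) := by exact_mod_cast hcardpos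
  rw [div_le_iff₀ hcardR]
  -- the product identity
  have hprodid : (∏ j ∈ Finset.Ico (M+2) K, (n - j))
      * ((∏ j ∈ Finset.Ico 2 (M+2), (n - j)) * (n * (n-1)))
      = Fintype.card (Fin K ↪ Fin n) := by
    rw [Fintype.card_embedding_eq, Fintype.card_fin, Fintype.card_fin,
      Nat.descFactorial_eq_prod_range, Finset.range_eq_Ico]
    rw [← Finset.prod_Ico_consecutive (fun j => n - j) (by omega : 0 ≤ M+2) (by omega : M+2 ≤ K)]
    rw [← Finset.prod_Ico_consecutive (fun j => n - j) (by omega : 0 ≤ 2) (by omega : 2 ≤ M+2)]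
    have h2 : (∏ j ∈ Finset.Ico 0 2, (n - j)) = n * (n - 1) := by
      rw [Nat.Ico_zero_eq_range]
      rw [Finset.prod_range_succ, Finset.prod_range_one]
      simp
    rw [h2]
    ring
  -- combine
  rw [hEmb, hC, hPhiM]
  set C1 : ℝ := ((∏ j ∈ Finset.Ico (M+2) K, (n - j) : ℕ) : ℝ) with hC1
  set C2 : ℝ := ((∏ j ∈ Finset.Ico 2 (M+2), (n - j) : ℕ) : ℝ) with hC2
  have hC1n : (0:ℝ) ≤ C1 := Nat.cast_nonneg _
  have hC2n : (0:ℝ) ≤ C2 := Nat.cast_nonneg _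
  calc C1 * PhiF n K x (M+1) M
      ≤ C1 * (C2 * PhiF n K x (M+1) 0) := by
        apply mul_le_mul_of_nonneg_left _ hC1n
        exact hchain
    _ ≤ C1 * (C2 * ((n:ℝ) * ((n:ℝ) - 1)
          * (∑ s : Fin 3, chainF n K x 0 s * Vb n K x (M+1-1) s))) := by
        apply mul_le_mul_of_nonneg_left _ hC1n
        apply mul_le_mul_of_nonneg_left _ hC2n
        exact hPhi0
    _ = chainExp n K x (M+1) * (C1 * (C2 * ((n:ℝ) * ((n:ℝ) - 1)))) := by
        rw [hcexp]
        ring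
    _ = chainExp n K x (M+1) * (Fintype.card (Fin K ↪ Fin n) : ℝ) := by
        congr 1
        rw [hC1, hC2, ← hprodid]
        have hn1 : ((n - 1 : ℕ) : ℝ) = (n:ℝ) - 1 := by
          have : 1 ≤ n := by omega
          push_cast [Nat.cast_sub this]
          ring
        push_cast [← hn1]
        ring


/-- the Markov chain `Z′` stochastically dominates the overlap process
`Z` of a uniform random ordered `K`-path with the fixed path `(1−2−⋯−K)`:
for every `x ≥ 1` and `1 ≤ m ≤ K − 1`,
`E[x^{Σ_{t=1}^m Z_t⁺}] ≤ E[x^{Σ_{t=1}^m Z′_t⁺}]`. -/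
theorem statement_9 (n K : ℕ) (hK : 2 ≤ K) (hKn : K < n) (x : ℝ) (hx : 1 ≤ x)
    (m : ℕ) (hm : 1 ≤ m) (hmK : m ≤ K - 1) :
    (∑ f : Fin K ↪ Fin n, x ^ zPlusSum n K m f) / (Fintype.card (Fin K ↪ Fin n) : ℝ)
      ≤ chainExp n K x m := by
  exact statement_9' n K hK hKn x hx m hm hmK

end PlantedStructures
end
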